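/- arXiv:2510.18282 — 6 statements merged into one kernel-verified Lean document; each statement's English description precedes it below -/
import Mathlib

section
/- Let C be a category and consider a commutative square with maps q : A → B (top), p : A → C (left), r : B → D (right), s : C → D (bottom), where p and q are epimorphisms. Suppose there exist sections α : C → A of p and β : D → B of r that are compatible in the sense that q ∘ α = β ∘ s. Then the square is a pushout square. -/
open CategoryTheory

/-- Consider a commutative square `r ∘ q = s ∘ p` with `p, q` epimorphisms, admitting compatible
sections `α` of `p` and `β` of `r` (i.e. `q ∘ α = β ∘ s`).  Then the square is a pushout. -/
theorem stmt2 {𝒞 : Type*} [Category 𝒞] {A B C D : 𝒞}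
    (q : A ⟶ B) (p : A ⟶ C) (r : B ⟶ D) (s : C ⟶ D)
    (hsq : q ≫ r = p ≫ s) [Epi p] [Epi q]
    (α : C ⟶ A) (β : D ⟶ B)
    (hα : α ≫ p = 𝟙 C) (hβ : β ≫ r = 𝟙 D)
    (hcompat : α ≫ q = s ≫ β) :
    IsPushout q p r s := by
  refine IsPushout.of_isColimit (Limits.PushoutCocone.IsColimit.mk hsq
    (fun c => β ≫ c.inl) (fun c => ?_) (fun c => ?_) (fun c m h1 h2 => ?_))
  · have hs : s ≫ β ≫ c.inl = c.inr := by
      rw [← Category.assoc, ← hcompat, Category.assoc, c.condition, ← Category.assoc, hα,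
        Category.id_comp]
    have h : q ≫ r ≫ β ≫ c.inl = q ≫ c.inl := by
      rw [← Category.assoc, ← Category.assoc, hsq, Category.assoc, Category.assoc, hs,
        c.condition]
    exact (cancel_epi q).mp h
  · rw [← Category.assoc, ← hcompat, Category.assoc, c.condition, ← Category.assoc, hα,
      Category.id_comp]
  · rw [← h1, ← Category.assoc, hβ, Category.id_comp]
end

section
/- In the simplex category Δ, the pushout of any two surjective monotone maps p : [n] → [k] and q : [n] → [l] exists in Δ, and moreover this pushout is absolute: it is sent to a pushout square by any functor out of Δ. -/
open CategoryTheory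

namespace Stmt5Aux

/-- The largest `j ≤ n` with `f j ≤ x` (or `0` if none). -/
def sec (n : ℕ) (f : ℕ → ℕ) (x : ℕ) : ℕ :=
  Nat.findGreatest (fun j => f j ≤ x) n

lemma sec_le (n : ℕ) (f : ℕ → ℕ) (x : ℕ) : sec n f x ≤ n :=
  Nat.findGreatest_le n

lemma le_sec {n : ℕ} {f : ℕ → ℕ} {x j : ℕ} (hj : j ≤ n) (h : f j ≤ x) :
    j ≤ sec n f x :=
  Nat.le_findGreatest hj h

lemma f_sec_le {n : ℕ} {f : ℕ → ℕ} (h0 : f 0 = 0) (x : ℕ) :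
    f (sec n f x) ≤ x :=
  Nat.findGreatest_spec (P := fun j => f j ≤ x) (Nat.zero_le n) (by simp [h0])

lemma f_sec {n : ℕ} {f : ℕ → ℕ} (hf : Monotone f) (h0 : f 0 = 0) {x : ℕ}
    (hx : ∃ j, j ≤ n ∧ f j = x) : f (sec n f x) = x := by
  obtain ⟨j, hj, rfl⟩ := hx
  exact le_antisymm (f_sec_le h0 _) (hf (le_sec hj le_rfl))

lemma sec_mono (n : ℕ) (f : ℕ → ℕ) : Monotone (sec n f) := by
  intro x y hxy
  exact Nat.findGreatest_mono (fun j hj => hj.trans hxy) le_rfl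

section Main

variable (n : ℕ) (P Q : ℕ → ℕ)

/-- `j` is a breakpoint: both `P` and `Q` jump between `j` and `j+1`. -/
def brk (j : ℕ) : Prop := j < n ∧ P j ≠ P (j + 1) ∧ Q j ≠ Q (j + 1)

instance : DecidablePred (brk n P Q) := fun j => by unfold brk; infer_instance

/-- Number of breakpoints below `i`. -/
def cnt (i : ℕ) : ℕ := ((Finset.range i).filter (brk n P Q)).card

lemma cnt_zero : cnt n P Q 0 = 0 := by simp [cnt]

lemma cnt_succ (i : ℕ) :
    cnt n P Q (i + 1) = cnt n P Q i + (if brk n P Q i then 1 else 0) := by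
  unfold cnt
  rw [Finset.range_add_one, Finset.filter_insert]
  split_ifs
  · rw [Finset.card_insert_of_notMem (by simp)]
  · simp

lemma cnt_mono : Monotone (cnt n P Q) := fun i j hij =>
  Finset.card_le_card (Finset.filter_subset_filter _ (by simpa using hij))

lemma cnt_le_m (i : ℕ) : cnt n P Q i ≤ cnt n P Q n := by
  refine Finset.card_le_card (fun j hj => ?_)
  simp only [Finset.mem_filter, Finset.mem_range] at hj ⊢
  exact ⟨hj.2.1, hj.2⟩

lemma cnt_eq_aux {i j : ℕ} (hij : i ≤ j)
    (h : ∀ t, i ≤ t → t < j → ¬ brk n P Q t) : cnt n P Q i = cnt n P Q j := by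
  induction j, hij using Nat.le_induction with
  | base => rfl
  | succ j hij ih =>
    rw [cnt_succ, if_neg (h j hij (Nat.lt_succ_self j)), Nat.add_zero,
      ← ih (fun t ht htj => h t ht (htj.trans (Nat.lt_succ_self j)))]

lemma cnt_eq_of_P (hP : Monotone P) {i j : ℕ} (hij : i ≤ j)
    (h : P i = P j) : cnt n P Q i = cnt n P Q j := by
  refine cnt_eq_aux n P Q hij (fun t ht htj hbrk => hbrk.2.1 ?_)
  have h1 : P i ≤ P t := hP ht
  have h2 : P (t + 1) ≤ P j := hP htj
  have h3 : P t ≤ P (t + 1) := hP (Nat.le_succ t)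
  omega

lemma cnt_eq_of_Q (hQ : Monotone Q) {i j : ℕ} (hij : i ≤ j)
    (h : Q i = Q j) : cnt n P Q i = cnt n P Q j := by
  refine cnt_eq_aux n P Q hij (fun t ht htj hbrk => hbrk.2.2 ?_)
  have h1 : Q i ≤ Q t := hQ ht
  have h2 : Q (t + 1) ≤ Q j := hQ htj
  have h3 : Q t ≤ Q (t + 1) := hQ (Nat.le_succ t)
  omega

lemma cnt_secP (hP : Monotone P) (hP0 : P 0 = 0) {j : ℕ} (hj : j ≤ n) :
    cnt n P Q (sec n P (P j)) = cnt n P Q j := by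
  have h1 : j ≤ sec n P (P j) := le_sec hj le_rfl
  have h2 : P j = P (sec n P (P j)) :=
    le_antisymm (hP h1) (f_sec_le hP0 _)
  exact (cnt_eq_of_P n P Q hP h1 h2).symm

lemma cnt_secQ (hQ : Monotone Q) (hQ0 : Q 0 = 0) {j : ℕ} (hj : j ≤ n) :
    cnt n P Q (sec n Q (Q j)) = cnt n P Q j := by
  have h1 : j ≤ sec n Q (Q j) := le_sec hj le_rfl
  have h2 : Q j = Q (sec n Q (Q j)) :=
    le_antisymm (hQ h1) (f_sec_le hQ0 _)
  exact (cnt_eq_of_Q n P Q hQ h1 h2).symm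

lemma cnt_sec_cnt {z : ℕ} (hz : z ≤ cnt n P Q n) :
    cnt n P Q (sec n (cnt n P Q) z) = z := by
  set J := sec n (cnt n P Q) z with hJ
  have h1 : cnt n P Q J ≤ z := f_sec_le (cnt_zero n P Q) z
  rcases eq_or_lt_of_le h1 with h | h
  · exact h
  have hJn : J < n := by
    rcases eq_or_lt_of_le (sec_le n (cnt n P Q) z) with h' | h'
    · exfalso; rw [hJ, h'] at h; omega
    · exact h'
  have h2 : cnt n P Q (J + 1) ≤ z := by
    rw [cnt_succ]; split_ifs <;> omega
  have := le_sec (f := cnt n P Q) (Nat.succ_le_of_lt hJn) h2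
  omega

/-- Move to the right end of the `P`-fiber, then the `Q`-fiber. -/
def estep (j : ℕ) : ℕ := sec n Q (Q (sec n P (P j)))

lemma estep_le (j : ℕ) : estep n P Q j ≤ n := sec_le n Q _

lemma le_estep {j : ℕ} (hj : j ≤ n) : j ≤ estep n P Q j :=
  (le_sec hj le_rfl).trans (le_sec (sec_le n P _) le_rfl)

lemma cnt_estep (hP : Monotone P) (hQ : Monotone Q) (hP0 : P 0 = 0) (hQ0 : Q 0 = 0) {j : ℕ} (hj : j ≤ n) :
    cnt n P Q (estep n P Q j) = cnt n P Q j := by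
  rw [estep, cnt_secQ n P Q hQ hQ0 (sec_le n P _), cnt_secP n P Q hP hP0 hj]

lemma estep_fix {j : ℕ} (hj : j ≤ n) (hfix : estep n P Q j = j) :
    sec n (cnt n P Q) (cnt n P Q j) = j := by
  have hu : sec n P (P j) = j := by
    have h1 : j ≤ sec n P (P j) := le_sec hj le_rfl
    have h2 : sec n P (P j) ≤ estep n P Q j := le_sec (sec_le n P _) le_rfl
    omega
  have hw : sec n Q (Q j) = j := by rw [estep, hu] at hfix; exact hfix
  have h1 : j ≤ sec n (cnt n P Q) (cnt n P Q j) := le_sec hj le_rfl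
  rcases eq_or_lt_of_le h1 with h | h
  · exact h.symm
  exfalso
  set J := sec n (cnt n P Q) (cnt n P Q j) with hJ
  have hJn : J ≤ n := sec_le n _ _
  have hc1 : cnt n P Q (j + 1) ≤ cnt n P Q j :=
    (cnt_mono n P Q h).trans (f_sec_le (cnt_zero n P Q) _)
  have hc2 : ¬ brk n P Q j := by
    intro hb
    rw [cnt_succ, if_pos hb] at hc1
    omega
  rw [brk] at hc2
  push_neg at hc2
  rcases Decidable.em (P j = P (j + 1)) with hPj | hPj
  · have : j + 1 ≤ sec n P (P j) := le_sec (by omega) (le_of_eq hPj.symm)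
    omega
  · have hQj : Q j = Q (j + 1) := hc2 (by omega) hPj
    have : j + 1 ≤ sec n Q (Q j) := le_sec (by omega) (le_of_eq hQj.symm)
    omega

lemma iter_props (hP : Monotone P) (hQ : Monotone Q) (hP0 : P 0 = 0) (hQ0 : Q 0 = 0) (t : ℕ) {j : ℕ} (hj : j ≤ n) :
    (estep n P Q)^[t] j ≤ n ∧
    cnt n P Q ((estep n P Q)^[t] j) = cnt n P Q j ∧
    (estep n P Q)^[t] j ≤ sec n (cnt n P Q) (cnt n P Q j) := by
  induction t with
  | zero => exact ⟨hj, rfl, le_sec hj le_rfl⟩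
  | succ t ih =>
    obtain ⟨h1, h2, h3⟩ := ih
    rw [Function.iterate_succ_apply']
    refine ⟨estep_le n P Q _, ?_, ?_⟩
    · rw [cnt_estep n P Q hP hQ hP0 hQ0 h1, h2]
    · exact le_sec (estep_le n P Q _)
        (le_of_eq (by rw [cnt_estep n P Q hP hQ hP0 hQ0 h1, h2]))

lemma estep_v_fix (hP : Monotone P) (hQ : Monotone Q) (hP0 : P 0 = 0) (hQ0 : Q 0 = 0) {j : ℕ} (hj : j ≤ n) :
    estep n P Q (sec n (cnt n P Q) (cnt n P Q j)) =
      sec n (cnt n P Q) (cnt n P Q j) := by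
  set J := sec n (cnt n P Q) (cnt n P Q j) with hJ
  have hJn : J ≤ n := sec_le n _ _
  have h1 : J ≤ estep n P Q J := le_estep n P Q hJn
  have h2 : cnt n P Q (estep n P Q J) = cnt n P Q J :=
    cnt_estep n P Q hP hQ hP0 hQ0 hJn
  have h3 : cnt n P Q J = cnt n P Q j := cnt_sec_cnt n P Q (cnt_le_m n P Q j)
  have h4 : estep n P Q J ≤ J :=
    le_sec (estep_le n P Q _) (le_of_eq (by rw [h2, h3]))
  omega

lemma iter_disj (hP : Monotone P) (hQ : Monotone Q) (hP0 : P 0 = 0) (hQ0 : Q 0 = 0) (t : ℕ) {j : ℕ} (hj : j ≤ n) :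
    (estep n P Q)^[t] j = sec n (cnt n P Q) (cnt n P Q j) ∨
      j + t ≤ (estep n P Q)^[t] j := by
  induction t with
  | zero => right; simp
  | succ t ih =>
    have hprops := iter_props n P Q hP hQ hP0 hQ0 t hj
    rcases Decidable.em ((estep n P Q)^[t] j = sec n (cnt n P Q) (cnt n P Q j))
      with h | h
    · left
      rw [Function.iterate_succ_apply', h]
      exact estep_v_fix n P Q hP hQ hP0 hQ0 hj
    · rcases ih with h' | h'
      · exact absurd h' h
      right
      rw [Function.iterate_succ_apply']
      set i := (estep n P Q)^[t] j with hi
      have hin : i ≤ n := hprops.1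
      have hle : i ≤ estep n P Q i := le_estep n P Q hin
      have hne : estep n P Q i ≠ i := by
        intro hfix
        have := estep_fix n P Q hin hfix
        rw [hprops.2.1] at this
        exact h this.symm
      omega

lemma iter_stable (hP : Monotone P) (hQ : Monotone Q) (hP0 : P 0 = 0) (hQ0 : Q 0 = 0) {j : ℕ} (hj : j ≤ n) :
    (estep n P Q)^[n + 1] j = sec n (cnt n P Q) (cnt n P Q j) := by
  rcases iter_disj n P Q hP hQ hP0 hQ0 (n + 1) hj with h | h
  · exact h
  · have := (iter_props n P Q hP hQ hP0 hQ0 (n + 1) hj).1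
    omega

end Main

end Stmt5Aux

open Stmt5Aux in
/-- In the simplex category `Δ`, the pushout of any two surjective (monotone) maps
`p : [n] → [k]` and `q : [n] → [l]` exists, and it is an *absolute* pushout: it is sent to a
pushout square by every functor out of `Δ` (taking `F` to be the identity functor recovers the
existence of the pushout in `Δ` itself). -/
theorem stmt5 (n k l : ℕ) (p : SimplexCategory.mk n ⟶ SimplexCategory.mk k)
    (q : SimplexCategory.mk n ⟶ SimplexCategory.mk l)
    (hp : Function.Surjective p.toOrderHom) (hq : Function.Surjective q.toOrderHom) :
    ∃ (m : ℕ) (a : SimplexCategory.mk k ⟶ SimplexCategory.mk m)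
      (b : SimplexCategory.mk l ⟶ SimplexCategory.mk m),
      p ≫ a = q ≫ b ∧
      ∀ {E : Type*} [Category E] (F : SimplexCategory ⥤ E),
        IsPushout (F.map p) (F.map q) (F.map a) (F.map b) := by
  classical
  -- extensions of `p` and `q` to monotone maps `ℕ → ℕ`
  set P : ℕ → ℕ := fun j => (p.toOrderHom ⟨min j n, Nat.lt_succ_of_le (min_le_right _ _)⟩ : Fin (k + 1)).1 with hPdef
  set Q : ℕ → ℕ := fun j => (q.toOrderHom ⟨min j n, Nat.lt_succ_of_le (min_le_right _ _)⟩ : Fin (l + 1)).1 with hQdef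
  have hPval : ∀ i : Fin (n + 1), P i.1 = (p.toOrderHom i).1 := by
    intro i
    have hi : (⟨min i.1 n, Nat.lt_succ_of_le (min_le_right _ _)⟩ : Fin (n + 1)) = i :=
      Fin.ext (Nat.min_eq_left (Nat.lt_succ_iff.mp i.2))
    simp only [hPdef]
    exact congrArg Fin.val (congrArg p.toOrderHom hi)
  have hQval : ∀ i : Fin (n + 1), Q i.1 = (q.toOrderHom i).1 := by
    intro i
    have hi : (⟨min i.1 n, Nat.lt_succ_of_le (min_le_right _ _)⟩ : Fin (n + 1)) = i :=
      Fin.ext (Nat.min_eq_left (Nat.lt_succ_iff.mp i.2))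
    simp only [hQdef]
    exact congrArg Fin.val (congrArg q.toOrderHom hi)
  have hP : Monotone P := by
    intro i j hij
    exact p.toOrderHom.monotone (by simp [Fin.le_def]; omega)
  have hQ : Monotone Q := by
    intro i j hij
    exact q.toOrderHom.monotone (by simp [Fin.le_def]; omega)
  have hPle : ∀ j, P j ≤ k := fun j => Nat.lt_succ_iff.mp (p.toOrderHom _).2
  have hQle : ∀ j, Q j ≤ l := fun j => Nat.lt_succ_iff.mp (q.toOrderHom _).2
  have hPsurj : ∀ x ≤ k, ∃ j, j ≤ n ∧ P j = x := by
    intro x hx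
    obtain ⟨j, hj⟩ := hp ⟨x, Nat.lt_succ_of_le hx⟩
    exact ⟨j.1, Nat.lt_succ_iff.mp j.2, by rw [hPval j, hj]⟩
  have hQsurj : ∀ y ≤ l, ∃ j, j ≤ n ∧ Q j = y := by
    intro y hy
    obtain ⟨j, hj⟩ := hq ⟨y, Nat.lt_succ_of_le hy⟩
    exact ⟨j.1, Nat.lt_succ_iff.mp j.2, by rw [hQval j, hj]⟩
  have hP0 : P 0 = 0 := by
    obtain ⟨j, _, hj⟩ := hPsurj 0 (Nat.zero_le _)
    have := hP (Nat.zero_le j)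
    omega
  have hQ0 : Q 0 = 0 := by
    obtain ⟨j, _, hj⟩ := hQsurj 0 (Nat.zero_le _)
    have := hQ (Nat.zero_le j)
    omega
  -- the pushout object
  set m := cnt n P Q n with hm
  have hcnt_le : ∀ i, cnt n P Q i ≤ m := fun i => cnt_le_m n P Q i
  -- the morphisms
  let R : SimplexCategory.mk n ⟶ SimplexCategory.mk m :=
    SimplexCategory.mkHom ⟨fun i => ⟨cnt n P Q i.1, Nat.lt_succ_of_le (cnt_le_m n P Q _)⟩,
      fun i j hij => cnt_mono n P Q hij⟩
  let U : SimplexCategory.mk k ⟶ SimplexCategory.mk n :=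
    SimplexCategory.mkHom ⟨fun x => ⟨sec n P x.1, Nat.lt_succ_of_le (sec_le n P _)⟩,
      fun x y hxy => sec_mono n P hxy⟩
  let W : SimplexCategory.mk l ⟶ SimplexCategory.mk n :=
    SimplexCategory.mkHom ⟨fun y => ⟨sec n Q y.1, Nat.lt_succ_of_le (sec_le n Q _)⟩,
      fun x y hxy => sec_mono n Q hxy⟩
  let V : SimplexCategory.mk m ⟶ SimplexCategory.mk n :=
    SimplexCategory.mkHom ⟨fun z => ⟨sec n (cnt n P Q) z.1,
      Nat.lt_succ_of_le (sec_le n (cnt n P Q) _)⟩,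
      fun x y hxy => sec_mono n (cnt n P Q) hxy⟩
  -- pointwise values
  have hRval : ∀ i : Fin (n + 1), (R.toOrderHom i).1 = cnt n P Q i.1 := fun i => rfl
  have hUval : ∀ x : Fin (k + 1), (U.toOrderHom x).1 = sec n P x.1 := fun x => rfl
  have hWval : ∀ y : Fin (l + 1), (W.toOrderHom y).1 = sec n Q y.1 := fun y => rfl
  have hVval : ∀ z : Fin (m + 1), (V.toOrderHom z).1 = sec n (cnt n P Q) z.1 := fun z => rfl
  -- morphism-level identities
  have hE1 : p ≫ U ≫ R = R := by
    apply SimplexCategory.Hom.ext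
    apply OrderHom.ext
    funext i
    apply Fin.ext
    show cnt n P Q (sec n P (p.toOrderHom i).1) = cnt n P Q i.1
    rw [← hPval i]
    exact cnt_secP n P Q hP hP0 (Nat.lt_succ_iff.mp i.2)
  have hE2 : q ≫ W ≫ R = R := by
    apply SimplexCategory.Hom.ext
    apply OrderHom.ext
    funext i
    apply Fin.ext
    show cnt n P Q (sec n Q (q.toOrderHom i).1) = cnt n P Q i.1
    rw [← hQval i]
    exact cnt_secQ n P Q hQ hQ0 (Nat.lt_succ_iff.mp i.2)
  have hE3 : U ≫ p = 𝟙 _ := by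
    apply SimplexCategory.Hom.ext
    apply OrderHom.ext
    funext x
    apply Fin.ext
    show (p.toOrderHom ⟨sec n P x.1, Nat.lt_succ_of_le (sec_le n P _)⟩).1 = x.1
    rw [← hPval ⟨sec n P x.1, Nat.lt_succ_of_le (sec_le n P _)⟩]
    exact f_sec hP hP0 (hPsurj x.1 (Nat.lt_succ_iff.mp x.2))
  have hE4 : W ≫ q = 𝟙 _ := by
    apply SimplexCategory.Hom.ext
    apply OrderHom.ext
    funext y
    apply Fin.ext
    show (q.toOrderHom ⟨sec n Q y.1, Nat.lt_succ_of_le (sec_le n Q _)⟩).1 = y.1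
    rw [← hQval ⟨sec n Q y.1, Nat.lt_succ_of_le (sec_le n Q _)⟩]
    exact f_sec hQ hQ0 (hQsurj y.1 (Nat.lt_succ_iff.mp y.2))
  have hE5 : V ≫ R = 𝟙 _ := by
    apply SimplexCategory.Hom.ext
    apply OrderHom.ext
    funext z
    apply Fin.ext
    show cnt n P Q (sec n (cnt n P Q) z.1) = z.1
    exact cnt_sec_cnt n P Q (Nat.lt_succ_iff.mp z.2)
  -- the key endomorphism and its iterates
  let Emor : SimplexCategory.mk n ⟶ SimplexCategory.mk n := p ≫ U ≫ q ≫ W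
  have hEmorval : ∀ i : Fin (n + 1), (Emor.toOrderHom i).1 = estep n P Q i.1 := by
    intro i
    show sec n Q (q.toOrderHom ⟨sec n P (p.toOrderHom i).1,
        Nat.lt_succ_of_le (sec_le n P _)⟩).1 = estep n P Q i.1
    rw [← hQval ⟨sec n P (p.toOrderHom i).1, Nat.lt_succ_of_le (sec_le n P _)⟩,
      ← hPval i]
    rfl
  let Epow : ℕ → (SimplexCategory.mk n ⟶ SimplexCategory.mk n) :=
    fun t => Nat.rec (𝟙 _) (fun _ f => f ≫ Emor) t
  have hEpowval : ∀ t (i : Fin (n + 1)),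
      ((Epow t).toOrderHom i).1 = (estep n P Q)^[t] i.1 := by
    intro t
    induction t with
    | zero => intro i; rfl
    | succ t ih =>
      intro i
      have : Epow (t + 1) = Epow t ≫ Emor := rfl
      rw [this, Function.iterate_succ_apply']
      show (Emor.toOrderHom ((Epow t).toOrderHom i)).1 = estep n P Q ((estep n P Q)^[t] i.1)
      rw [hEmorval, ih]
  have hE6 : Epow (n + 1) = R ≫ V := by
    apply SimplexCategory.Hom.ext
    apply OrderHom.ext
    funext i
    apply Fin.ext
    exact (hEpowval (n + 1) i).trans
      (iter_stable n P Q hP hQ hP0 hQ0 (Nat.lt_succ_iff.mp i.2))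
  refine ⟨m, U ≫ R, W ≫ R, ?_, ?_⟩
  · rw [hE1, hE2]
  · intro E _ F
    have hcomm : F.map p ≫ F.map (U ≫ R) = F.map q ≫ F.map (W ≫ R) := by
      rw [← F.map_comp, ← F.map_comp, hE1, hE2]
    have hM1 : Emor ≫ q = (p ≫ U) ≫ q := by
      show (p ≫ U ≫ q ≫ W) ≫ q = (p ≫ U) ≫ q
      simp [hE4]
    have hM2 : (p ≫ U) ≫ p = p := by
      rw [Category.assoc, hE3, Category.comp_id]
    have hgen : ∀ {Z : E} (x : F.obj (SimplexCategory.mk k) ⟶ Z)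
        (y : F.obj (SimplexCategory.mk l) ⟶ Z), F.map p ≫ x = F.map q ≫ y →
        F.map R ≫ F.map V ≫ F.map q ≫ y = F.map q ≫ y := by
      intro Z x y hg
      have hstep : F.map Emor ≫ F.map q ≫ y = F.map q ≫ y := by
        rw [← Functor.map_comp_assoc, hM1, Functor.map_comp_assoc, ← hg,
          ← Functor.map_comp_assoc, hM2]
      have hiter : ∀ t, F.map (Epow t) ≫ F.map q ≫ y = F.map q ≫ y := by
        intro t
        induction t with
        | zero =>
          show F.map (𝟙 (SimplexCategory.mk n)) ≫ F.map q ≫ y = F.map q ≫ y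
          rw [F.map_id, Category.id_comp]
        | succ t ih =>
          show F.map (Epow t ≫ Emor) ≫ F.map q ≫ y = F.map q ≫ y
          rw [Functor.map_comp, Category.assoc, hstep, ih]
      rw [← Functor.map_comp_assoc, ← hE6]
      exact hiter (n + 1)
    refine IsPushout.of_isColimit' ⟨hcomm⟩ (Limits.PushoutCocone.IsColimit.mk _
      (fun s => F.map V ≫ F.map q ≫ s.inr) ?_ ?_ ?_)
    · intro s
      rw [Functor.map_comp, Category.assoc, hgen s.inl s.inr s.condition,
        ← s.condition, ← Functor.map_comp_assoc, hE3, F.map_id, Category.id_comp]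
    · intro s
      rw [Functor.map_comp, Category.assoc, hgen s.inl s.inr s.condition,
        ← Functor.map_comp_assoc, hE4, F.map_id, Category.id_comp]
    · intro s mh h1 h2
      have h3 : F.map R ≫ mh = F.map q ≫ s.inr := by
        rw [← hE1, Functor.map_comp, Category.assoc, h1, s.condition]
      show mh = F.map V ≫ F.map q ≫ s.inr
      rw [← h3, ← Functor.map_comp_assoc, hE5, F.map_id, Category.id_comp]
end

section
/- Let X be a simplicial set. Every point ξ of the geometric realization |X| admits a representative (x, t) with x ∈ X_n non-degenerate and t an interior point of the topological n-simplex Δ^n, and this representative is unique: if x ⊗ t = y ⊗ s with x, y non-degenerate and t, s interior points, then n = m, x = y and t = s. -/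
open CategoryTheory Opposite

/-- A `k`-simplex of a simplicial set is degenerate if it is the image of a simplex of strictly
smaller dimension under a surjection. -/
def SSet.IsDegenerateSimplex (X : SSet) {k : ℕ}
    (z : X.obj (op (SimplexCategory.mk k))) : Prop :=
  ∃ (j : ℕ) (β : SimplexCategory.mk k ⟶ SimplexCategory.mk j),
    j < k ∧ Function.Surjective β.toOrderHom ∧ ∃ w, X.map β.op w = z

/-- The topological `n`-simplex as in the older Mathlib: the set of `ℝ≥0`-valued barycentric
coordinates summing to `1`. -/
def SimplexCategory.toTopObj (x : SimplexCategory) : Set (Fin (x.len + 1) → NNReal) :=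
  { f | ∑ i, f i = 1 }

/-- The map of topological simplices induced by a morphism, as in the older Mathlib. -/
def SimplexCategory.toTopMap {x y : SimplexCategory} (f : x ⟶ y) (g : x.toTopObj) :
    y.toTopObj :=
  ⟨fun i => ∑ j ∈ Finset.univ.filter (fun k => f.toOrderHom k = i), g.1 j, by
    simp only [SimplexCategory.toTopObj, Set.mem_setOf_eq]
    rw [Finset.sum_fiberwise]
    exact g.2⟩

/-- The "points" out of which the geometric realization `|X|` is built:
pairs `(x, t)` with `x ∈ X_n` and `t ∈ Δ^n` (the topological `n`-simplex). -/
def SSet.RealizationPt (X : SSet) : Type _ :=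
  Σ n : ℕ, X.obj (op (SimplexCategory.mk n)) × (SimplexCategory.mk n).toTopObj

/-- The basic relation `(x, α_* t) ∼ (α^* x, t)` defining the geometric realization as a
quotient of `⊔ₙ Xₙ × Δ^n`; two points represent the same point of `|X|` iff they are related by
the equivalence relation generated by this relation. -/
def SSet.RealizationRel (X : SSet) : X.RealizationPt → X.RealizationPt → Prop :=
  fun p q =>
    ∃ α : SimplexCategory.mk q.1 ⟶ SimplexCategory.mk p.1,
      X.map α.op p.2.1 = q.2.1 ∧ SimplexCategory.toTopMap α q.2.2 = p.2.2

/-- `t ∈ Δ^n` is an interior point if all its barycentric coordinates are positive. -/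
def SSet.IsInteriorPt {n : ℕ} (t : (SimplexCategory.mk n).toTopObj) : Prop :=
  ∀ i, 0 < t.1 i


namespace RealAux
open SimplexCategory

lemma mySections {k j : ℕ} (f : SimplexCategory.mk k ⟶ SimplexCategory.mk j)
    (hf : Function.Surjective f.toOrderHom) :
    ∃ g g' : SimplexCategory.mk j ⟶ SimplexCategory.mk k,
      g ≫ f = 𝟙 _ ∧ g' ≫ f = 𝟙 _ ∧
      (∀ i, g.toOrderHom (f.toOrderHom i) ≤ i) ∧
      (∀ i, i ≤ g'.toOrderHom (f.toOrderHom i)) := by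
  classical
  have hne : ∀ b : Fin (j+1), (Finset.univ.filter (f.toOrderHom · = b)).Nonempty := by
    intro b
    obtain ⟨i, hi⟩ := hf b
    exact ⟨i, Finset.mem_filter.mpr ⟨Finset.mem_univ _, hi⟩⟩
  set G : Fin (j+1) → Fin (k+1) := fun b => (Finset.univ.filter (f.toOrderHom · = b)).min' (hne b)
  set G' : Fin (j+1) → Fin (k+1) := fun b => (Finset.univ.filter (f.toOrderHom · = b)).max' (hne b)
  have hG : ∀ b, f.toOrderHom (G b) = b := fun b => by
    have := Finset.min'_mem _ (hne b); simpa [G] using (Finset.mem_filter.mp this).2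
  have hG' : ∀ b, f.toOrderHom (G' b) = b := fun b => by
    have := Finset.max'_mem _ (hne b); simpa [G'] using (Finset.mem_filter.mp this).2
  have hGmono : Monotone G := by
    intro a b hab
    by_contra h
    push_neg at h
    have : f.toOrderHom (G b) ≤ f.toOrderHom (G a) := f.toOrderHom.monotone h.le
    rw [hG, hG] at this
    exact absurd (le_antisymm hab this) (by rintro rfl; exact lt_irrefl _ h)
  have hG'mono : Monotone G' := by
    intro a b hab
    by_contra h
    push_neg at h
    have : f.toOrderHom (G' b) ≤ f.toOrderHom (G' a) := f.toOrderHom.monotone h.le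
    rw [hG', hG'] at this
    exact absurd (le_antisymm hab this) (by rintro rfl; exact lt_irrefl _ h)
  refine ⟨SimplexCategory.mkHom ⟨G, hGmono⟩, SimplexCategory.mkHom ⟨G', hG'mono⟩, ?_, ?_, ?_, ?_⟩
  · apply SimplexCategory.Hom.ext; ext i : 2
    simpa using hG i
  · apply SimplexCategory.Hom.ext; ext i : 2
    simpa using hG' i
  · intro i
    exact Finset.min'_le _ i (by simp)
  · intro i
    exact Finset.le_max' _ i (by simp)

lemma myFactor {a b : ℕ} (θ : SimplexCategory.mk a ⟶ SimplexCategory.mk b) :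
    ∃ (c : ℕ) (e : SimplexCategory.mk a ⟶ SimplexCategory.mk c)
      (m : SimplexCategory.mk c ⟶ SimplexCategory.mk b),
      Function.Surjective e.toOrderHom ∧ Function.Injective m.toOrderHom ∧
      e ≫ m = θ ∧ c ≤ b := by
  refine ⟨(Limits.image θ).len,
    Limits.factorThruImage θ ≫ eqToHom (mk_len _).symm,
    eqToHom (mk_len _) ≫ Limits.image.ι θ, ?_, ?_, ?_, ?_⟩
  · rw [← SimplexCategory.epi_iff_surjective]; infer_instance
  · rw [← SimplexCategory.mono_iff_injective]; infer_instance
  · simp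
  · have := SimplexCategory.len_le_of_mono (f := Limits.image.ι θ)
    simpa using this

/-- Eilenberg-Zilber existence -/
lemma ezExists (X : SSet) : ∀ (n : ℕ) (x : X.obj (op (SimplexCategory.mk n))),
    ∃ (j : ℕ) (σ : SimplexCategory.mk n ⟶ SimplexCategory.mk j)
      (y : X.obj (op (SimplexCategory.mk j))),
      Function.Surjective σ.toOrderHom ∧ ¬ X.IsDegenerateSimplex y ∧ X.map σ.op y = x := by
  intro n
  induction n using Nat.strong_induction_on with
  | _ n ih =>
    intro x
    by_cases hx : X.IsDegenerateSimplex x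
    · obtain ⟨j, β, hj, hβ, w, hw⟩ := hx
      obtain ⟨l, σ', y, hσ', hy, hyw⟩ := ih j hj w
      refine ⟨l, β ≫ σ', y, ?_, hy, ?_⟩
      · rw [SimplexCategory.comp_toOrderHom]
        exact (hσ'.comp hβ : _)
      · rw [op_comp, X.map_comp]
        simp only [types_comp_apply]
        rw [hyw, hw]
    · exact ⟨n, 𝟙 _, x, fun b => ⟨b, rfl⟩, hx, by simp⟩

/-- key injectivity -/
lemma nondeg_pullback_injective (X : SSet) {j l : ℕ}
    (y : X.obj (op (SimplexCategory.mk j))) (hy : ¬ X.IsDegenerateSimplex y)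
    (z : X.obj (op (SimplexCategory.mk l))) (θ : SimplexCategory.mk j ⟶ SimplexCategory.mk l)
    (h : X.map θ.op z = y) : Function.Injective θ.toOrderHom ∧ j ≤ l := by
  obtain ⟨c, e, m, he, hm, hem, hcb⟩ := myFactor θ
  have hy' : X.map e.op (X.map m.op z) = y := by
    rw [← h, ← hem, op_comp, X.map_comp]; rfl
  have hcj : j ≤ c := by
    by_contra hlt
    push_neg at hlt
    exact hy ⟨c, e, hlt, he, _, hy'⟩
  have hcj' : c ≤ j := @SimplexCategory.le_of_epi _ _ e
    (SimplexCategory.epi_iff_surjective.mpr he)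
  have hcjeq : c = j := le_antisymm hcj' hcj
  subst hcjeq
  -- e is epi between equal lengths, hence bijective hence identity? no: mono? show e injective
  have hebij : Function.Bijective e.toOrderHom := by
    rw [Fintype.bijective_iff_surjective_and_card]
    exact ⟨he, rfl⟩
  constructor
  · rw [← hem, SimplexCategory.comp_toOrderHom]
    exact (hm.comp hebij.1 : _)
  · exact le_trans hcj hcb

lemma ezUnique (X : SSet) {k j : ℕ}
    (σ τ : SimplexCategory.mk k ⟶ SimplexCategory.mk j)
    (hσ : Function.Surjective σ.toOrderHom) (hτ : Function.Surjective τ.toOrderHom)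
    (y z : X.obj (op (SimplexCategory.mk j)))
    (hy : ¬ X.IsDegenerateSimplex y) (hz : ¬ X.IsDegenerateSimplex z)
    (h : X.map σ.op y = X.map τ.op z) : y = z ∧ σ = τ := by
  obtain ⟨g, g', hg, hg', hgle, hg'le⟩ := mySections σ hσ
  have key : ∀ g₀ : SimplexCategory.mk j ⟶ SimplexCategory.mk k, g₀ ≫ σ = 𝟙 _ →
      (g₀ ≫ τ = 𝟙 _) ∧ y = z := by
    intro g₀ hg₀
    have h1 : X.map (g₀ ≫ τ).op z = y := by
      have : X.map g₀.op (X.map σ.op y) = X.map g₀.op (X.map τ.op z) := by rw [h]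
      calc X.map (g₀ ≫ τ).op z = X.map g₀.op (X.map τ.op z) := by
            rw [op_comp, X.map_comp]; rfl
        _ = X.map g₀.op (X.map σ.op y) := this.symm
        _ = X.map (g₀ ≫ σ).op y := by rw [op_comp, X.map_comp]; rfl
        _ = y := by rw [hg₀]; simp
    have hinj := (nondeg_pullback_injective X y hy z (g₀ ≫ τ) h1).1
    have : g₀ ≫ τ = 𝟙 _ := by
      have : Mono (g₀ ≫ τ) := SimplexCategory.mono_iff_injective.mpr hinj
      exact SimplexCategory.eq_id_of_mono _
    refine ⟨this, ?_⟩
    rw [← h1, this]; simp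
  obtain ⟨hgτ, hyz⟩ := key g hg
  obtain ⟨hg'τ, -⟩ := key g' hg'
  refine ⟨hyz, ?_⟩
  apply SimplexCategory.Hom.ext
  ext i : 2
  have h1 : τ.toOrderHom (g.toOrderHom (σ.toOrderHom i)) = σ.toOrderHom i := by
    have := congrArg (fun f => f.toOrderHom (σ.toOrderHom i)) hgτ
    simpa using this
  have h2 : τ.toOrderHom (g'.toOrderHom (σ.toOrderHom i)) = σ.toOrderHom i := by
    have := congrArg (fun f => f.toOrderHom (σ.toOrderHom i)) hg'τ
    simpa using this
  have hle : σ.toOrderHom i ≤ τ.toOrderHom i := by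
    calc σ.toOrderHom i = τ.toOrderHom (g.toOrderHom (σ.toOrderHom i)) := h1.symm
      _ ≤ τ.toOrderHom i := τ.toOrderHom.monotone (hgle i)
  have hge : τ.toOrderHom i ≤ σ.toOrderHom i := by
    calc τ.toOrderHom i ≤ τ.toOrderHom (g'.toOrderHom (σ.toOrderHom i)) :=
        τ.toOrderHom.monotone (hg'le i)
      _ = σ.toOrderHom i := h2
  exact le_antisymm hle hge



lemma sum_eq_one {n : ℕ} (t : (SimplexCategory.mk n).toTopObj) :
    ∑ i : Fin (n+1), t.1 i = 1 := t.2

open Classical in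
noncomputable def supp {n : ℕ} (t : (SimplexCategory.mk n).toTopObj) : Finset (Fin (n+1)) :=
  Finset.univ.filter (fun i => 0 < t.1 i)

lemma mem_supp {n : ℕ} (t : (SimplexCategory.mk n).toTopObj) (i : Fin (n+1)) :
    i ∈ supp t ↔ 0 < t.1 i := by simp [supp]

lemma not_mem_supp {n : ℕ} (t : (SimplexCategory.mk n).toTopObj) {i : Fin (n+1)}
    (h : i ∉ supp t) : t.1 i = 0 := by
  rw [mem_supp] at h
  simpa [pos_iff_ne_zero] using h

lemma supp_nonempty {n : ℕ} (t : (SimplexCategory.mk n).toTopObj) : (supp t).Nonempty := by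
  by_contra h
  rw [Finset.not_nonempty_iff_eq_empty] at h
  have h1 := sum_eq_one t
  rw [Finset.sum_eq_zero (fun i _ => ?_)] at h1
  · exact one_ne_zero h1.symm
  · by_contra hi
    have : i ∈ supp t := (mem_supp t i).mpr (pos_iff_ne_zero.mpr hi)
    simp [h] at this

noncomputable def sdim {n : ℕ} (t : (SimplexCategory.mk n).toTopObj) : ℕ := (supp t).card - 1

lemma supp_card {n : ℕ} (t : (SimplexCategory.mk n).toTopObj) :
    (supp t).card = sdim t + 1 := by
  have := Finset.card_pos.mpr (supp_nonempty t)
  unfold sdim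
  omega

noncomputable def semb {n : ℕ} (t : (SimplexCategory.mk n).toTopObj) :
    Fin (sdim t + 1) ↪o Fin (n+1) := (supp t).orderEmbOfFin (supp_card t)

lemma semb_mem {n : ℕ} (t : (SimplexCategory.mk n).toTopObj) (i : Fin (sdim t + 1)) :
    semb t i ∈ supp t := Finset.orderEmbOfFin_mem _ _ _

lemma semb_surj {n : ℕ} (t : (SimplexCategory.mk n).toTopObj) {a : Fin (n+1)}
    (ha : a ∈ supp t) : ∃ i, semb t i = a := by
  have : a ∈ Set.range ⇑(semb t) := by
    rw [semb, Finset.range_orderEmbOfFin]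
    exact ha
  exact this

noncomputable def sδ {n : ℕ} (t : (SimplexCategory.mk n).toTopObj) :
    SimplexCategory.mk (sdim t) ⟶ SimplexCategory.mk n :=
  SimplexCategory.mkHom ⟨⇑(semb t), (semb t).monotone⟩

lemma sδ_apply {n : ℕ} (t : (SimplexCategory.mk n).toTopObj) (i : Fin (sdim t + 1)) :
    (sδ t).toOrderHom i = semb t i := rfl

lemma sδ_inj {n : ℕ} (t : (SimplexCategory.mk n).toTopObj) :
    Function.Injective (sδ t).toOrderHom := (semb t).injective

noncomputable def spt {n : ℕ} (t : (SimplexCategory.mk n).toTopObj) :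
    (SimplexCategory.mk (sdim t)).toTopObj := by
  refine ⟨fun i => t.1 (semb t i), ?_⟩
  show ∑ i : Fin (sdim t + 1), t.1 (semb t i) = 1
  have h1 : ∑ i : Fin (sdim t + 1), t.1 (semb t i) = ∑ a ∈ supp t, t.1 a := by
    refine Finset.sum_bij (fun i _ => semb t i) (fun i _ => semb_mem t i)
      (fun i _ j _ hij => (semb t).injective hij) (fun a ha => ?_) (fun i _ => rfl)
    obtain ⟨i, hi⟩ := semb_surj t ha
    exact ⟨i, Finset.mem_univ _, hi⟩
  rw [h1, Finset.sum_subset (Finset.subset_univ _)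
    (fun a _ ha => not_mem_supp t ha)]
  exact sum_eq_one t

lemma spt_apply {n : ℕ} (t : (SimplexCategory.mk n).toTopObj) (i : Fin (sdim t + 1)) :
    (spt t).1 i = t.1 (semb t i) := rfl

lemma spt_interior {n : ℕ} (t : (SimplexCategory.mk n).toTopObj) :
    SSet.IsInteriorPt (spt t) := fun i => (mem_supp t _).mp (semb_mem t i)

lemma toTopMap_apply {m n : ℕ} (f : SimplexCategory.mk m ⟶ SimplexCategory.mk n)
    (g : (SimplexCategory.mk m).toTopObj) (i : Fin (n+1)) [DecidableEq (Fin (n+1))] :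
    (SimplexCategory.toTopMap f g).1 i
      = ∑ j ∈ Finset.univ.filter (fun j => f.toOrderHom j = i), g.1 j := by
  dsimp only [SimplexCategory.toTopMap]
  exact Finset.sum_congr (by ext; simp) (fun _ _ => rfl)

lemma pos_toTopMap {m n : ℕ} (f : SimplexCategory.mk m ⟶ SimplexCategory.mk n)
    (g : (SimplexCategory.mk m).toTopObj) {i : Fin (n+1)} {a : Fin (m+1)}
    (ha : f.toOrderHom a = i) (hpos : 0 < g.1 a) : 0 < (SimplexCategory.toTopMap f g).1 i := by
  classical
  rw [toTopMap_apply]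
  refine lt_of_lt_of_le hpos (Finset.single_le_sum (fun j _ => zero_le) ?_)
  simpa using ha

lemma exists_pos_of_toTopMap {m n : ℕ} (f : SimplexCategory.mk m ⟶ SimplexCategory.mk n)
    (g : (SimplexCategory.mk m).toTopObj) {i : Fin (n+1)}
    (h : 0 < (SimplexCategory.toTopMap f g).1 i) :
    ∃ a, f.toOrderHom a = i ∧ 0 < g.1 a := by
  classical
  rw [toTopMap_apply] at h
  by_contra hc
  push_neg at hc
  rw [Finset.sum_eq_zero] at h
  · exact lt_irrefl _ h
  · intro j hj
    rw [Finset.mem_filter] at hj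
    have := hc j hj.2
    simpa [pos_iff_ne_zero, not_not] using this

lemma toTopMap_sδ_spt {n : ℕ} (t : (SimplexCategory.mk n).toTopObj) :
    SimplexCategory.toTopMap (sδ t) (spt t) = t := by
  classical
  apply Subtype.ext
  funext i
  show (SimplexCategory.toTopMap (sδ t) (spt t)).1 i = t.1 i
  rw [toTopMap_apply]
  by_cases hi : i ∈ supp t
  · obtain ⟨i₀, hi₀⟩ := semb_surj t hi
    have hf : Finset.univ.filter (fun j => (sδ t).toOrderHom j = i) = {i₀} := by
      ext j
      simp only [Finset.mem_filter, Finset.mem_univ, true_and, Finset.mem_singleton]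
      rw [sδ_apply]
      constructor
      · intro h
        exact (semb t).injective (h.trans hi₀.symm)
      · rintro rfl
        exact hi₀
    rw [hf, Finset.sum_singleton, spt_apply, hi₀]
  · have hf : Finset.univ.filter (fun j => (sδ t).toOrderHom j = i) = ∅ := by
      ext j
      simp only [Finset.mem_filter, Finset.mem_univ, true_and, Finset.notMem_empty,
        iff_false]
      intro h
      exact hi (h ▸ semb_mem t j)
    rw [hf, Finset.sum_empty, not_mem_supp t hi]

lemma interior_toTopMap {m n : ℕ} (f : SimplexCategory.mk m ⟶ SimplexCategory.mk n)
    (hf : Function.Surjective f.toOrderHom) (g : (SimplexCategory.mk m).toTopObj)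
    (hg : SSet.IsInteriorPt g) : SSet.IsInteriorPt (SimplexCategory.toTopMap f g) := by
  intro i
  obtain ⟨a, ha⟩ := hf i
  exact pos_toTopMap f g ha (hg a)

noncomputable def sidx {n : ℕ} (t : (SimplexCategory.mk n).toTopObj) {a : Fin (n+1)}
    (ha : a ∈ supp t) : Fin (sdim t + 1) :=
  ((supp t).orderIsoOfFin (supp_card t)).symm ⟨a, ha⟩

lemma semb_sidx {n : ℕ} (t : (SimplexCategory.mk n).toTopObj) {a : Fin (n+1)}
    (ha : a ∈ supp t) : semb t (sidx t ha) = a := by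
  have : ((supp t).orderIsoOfFin (supp_card t)) (sidx t ha) = ⟨a, ha⟩ := by
    rw [sidx, OrderIso.apply_symm_apply]
  have h2 := congrArg Subtype.val this
  rwa [Finset.coe_orderIsoOfFin_apply] at h2

lemma sidx_mono {n : ℕ} (t : (SimplexCategory.mk n).toTopObj) {a b : Fin (n+1)}
    (ha : a ∈ supp t) (hb : b ∈ supp t) (h : a ≤ b) : sidx t ha ≤ sidx t hb := by
  have : (⟨a, ha⟩ : supp t) ≤ ⟨b, hb⟩ := h
  exact ((supp t).orderIsoOfFin (supp_card t)).symm.monotone this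

lemma mem_supp_toTopMap {m n : ℕ} (α : SimplexCategory.mk m ⟶ SimplexCategory.mk n)
    (s : (SimplexCategory.mk m).toTopObj) (i : Fin (sdim s + 1)) :
    α.toOrderHom (semb s i) ∈ supp (SimplexCategory.toTopMap α s) := by
  rw [mem_supp]
  exact pos_toTopMap α s rfl ((mem_supp s _).mp (semb_mem s i))

/-- Claim 1: the comparison surjection between supports. -/
lemma claim1 {m n : ℕ} (α : SimplexCategory.mk m ⟶ SimplexCategory.mk n)
    (s : (SimplexCategory.mk m).toTopObj) :
    ∃ β : SimplexCategory.mk (sdim s) ⟶ SimplexCategory.mk (sdim (SimplexCategory.toTopMap α s)),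
      Function.Surjective β.toOrderHom ∧
      sδ s ≫ α = β ≫ sδ (SimplexCategory.toTopMap α s) ∧
      SimplexCategory.toTopMap β (spt s) = spt (SimplexCategory.toTopMap α s) := by
  classical
  set t := SimplexCategory.toTopMap α s with ht
  have hmono : Monotone (fun i : Fin (sdim s + 1) => sidx t (mem_supp_toTopMap α s i)) := by
    intro i j hij
    exact sidx_mono t _ _ (α.toOrderHom.monotone ((semb s).monotone hij))
  refine ⟨SimplexCategory.mkHom ⟨_, hmono⟩, ?_, ?_, ?_⟩
  · -- surjective
    intro b
    have hb : (semb t b) ∈ supp t := semb_mem t b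
    have hpos : 0 < t.1 (semb t b) := (mem_supp t _).mp hb
    obtain ⟨a, haeq, hapos⟩ := exists_pos_of_toTopMap α s hpos
    have hamem : a ∈ supp s := (mem_supp s a).mpr hapos
    obtain ⟨i₀, hi₀⟩ := semb_surj s hamem
    refine ⟨i₀, ?_⟩
    show sidx t (mem_supp_toTopMap α s i₀) = b
    apply (semb t).injective
    rw [semb_sidx, hi₀, haeq]
  · -- commuting square
    apply SimplexCategory.Hom.ext
    ext i : 2
    show α.toOrderHom ((sδ s).toOrderHom i) = (sδ t).toOrderHom (sidx t (mem_supp_toTopMap α s i))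
    rw [sδ_apply, sδ_apply, semb_sidx]
  · -- pushforward of points
    apply Subtype.ext
    funext b
    show (SimplexCategory.toTopMap _ (spt s)).1 b = (spt t).1 b
    rw [toTopMap_apply, spt_apply]
    have hβ : ∀ i : Fin (sdim s + 1),
        (SimplexCategory.mkHom ⟨_, hmono⟩ : SimplexCategory.mk (sdim s) ⟶ _).toOrderHom i = b
          ↔ α.toOrderHom (semb s i) = semb t b := by
      intro i
      constructor
      · intro h
        have := congrArg (semb t) h
        rwa [show (SimplexCategory.mkHom ⟨_, hmono⟩ : SimplexCategory.mk (sdim s) ⟶ _).toOrderHom i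
            = sidx t (mem_supp_toTopMap α s i) from rfl, semb_sidx] at this
      · intro h
        apply (semb t).injective
        rw [show (SimplexCategory.mkHom ⟨_, hmono⟩ : SimplexCategory.mk (sdim s) ⟶ _).toOrderHom i
            = sidx t (mem_supp_toTopMap α s i) from rfl, semb_sidx]
        exact h
    have hrhs : t.1 (semb t b) = ∑ a ∈ Finset.univ.filter (fun a => α.toOrderHom a = semb t b), s.1 a := by
      exact toTopMap_apply α s (semb t b)
    rw [hrhs]
    -- restrict RHS to the support of s
    have hsubset : (Finset.univ.filter (fun a => α.toOrderHom a = semb t b)) ∩ supp s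
        ⊆ Finset.univ.filter (fun a => α.toOrderHom a = semb t b) := Finset.inter_subset_left
    rw [← Finset.sum_subset hsubset (fun a ha hna => ?_)]
    · -- bijection between filter (β = b) and (filter α = semb t b)  ∩ supp s
      refine Finset.sum_bij (fun i _ => semb s i) ?_ ?_ ?_ ?_
      · intro i hi
        rw [Finset.mem_filter] at hi
        rw [Finset.mem_inter, Finset.mem_filter]
        exact ⟨⟨Finset.mem_univ _, (hβ i).mp hi.2⟩, semb_mem s i⟩
      · intro i _ j _ hij
        exact (semb s).injective hij
      · intro a ha
        rw [Finset.mem_inter, Finset.mem_filter] at ha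
        obtain ⟨i, hi⟩ := semb_surj s ha.2
        refine ⟨i, Finset.mem_filter.mpr ⟨Finset.mem_univ _, (hβ i).mpr ?_⟩, hi⟩
        rw [hi]; exact ha.1.2
      · intro i _
        rfl
    · -- terms outside the support vanish
      have : a ∉ supp s := by
        intro hmem
        exact hna (Finset.mem_inter.mpr ⟨ha, hmem⟩)
      exact not_mem_supp s this


lemma toTopMap_id {a : ℕ} (p : (SimplexCategory.mk a).toTopObj) :
    SimplexCategory.toTopMap (𝟙 (SimplexCategory.mk a)) p = p := by
  classical
  apply Subtype.ext
  funext i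
  rw [toTopMap_apply]
  simp [Finset.filter_eq']

lemma toTopMap_comp {a b c : ℕ} (f : SimplexCategory.mk a ⟶ SimplexCategory.mk b)
    (g : SimplexCategory.mk b ⟶ SimplexCategory.mk c) (p : (SimplexCategory.mk a).toTopObj) :
    SimplexCategory.toTopMap (f ≫ g) p
      = SimplexCategory.toTopMap g (SimplexCategory.toTopMap f p) := by
  classical
  apply Subtype.ext
  funext i
  simp only [toTopMap_apply, Finset.sum_filter]
  have hx : ∀ (c : Prop) [Decidable c] (F : Fin (a+1) → NNReal),
      (if c then ∑ k, F k else 0) = ∑ k, if c then F k else 0 := fun c _ F => by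
    split_ifs <;> simp
  simp only [hx]
  rw [Finset.sum_comm]
  refine Finset.sum_congr rfl (fun k _ => ?_)
  rw [Finset.sum_eq_single (f.toOrderHom k)]
  · simp
  · intro j _ hj
    simp [Ne.symm hj]
  · simp

variable (X : SSet)

/-- dims agree in Eilenberg-Zilber decompositions -/
lemma ezDims {k j l : ℕ}
    (σ : SimplexCategory.mk k ⟶ SimplexCategory.mk j)
    (τ : SimplexCategory.mk k ⟶ SimplexCategory.mk l)
    (hσ : Function.Surjective σ.toOrderHom) (hτ : Function.Surjective τ.toOrderHom)
    (y : X.obj (op (SimplexCategory.mk j))) (z : X.obj (op (SimplexCategory.mk l)))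
    (hy : ¬ X.IsDegenerateSimplex y) (hz : ¬ X.IsDegenerateSimplex z)
    (h : X.map σ.op y = X.map τ.op z) : j ≤ l := by
  obtain ⟨g, -, hg, -, -, -⟩ := mySections σ hσ
  have h1 : X.map (g ≫ τ).op z = y := by
    calc X.map (g ≫ τ).op z = X.map g.op (X.map τ.op z) := by rw [op_comp, X.map_comp]; rfl
      _ = X.map g.op (X.map σ.op y) := by rw [h]
      _ = X.map (g ≫ σ).op y := by rw [op_comp, X.map_comp]; rfl
      _ = y := by rw [hg]; simp
  exact (nondeg_pullback_injective X y hy z (g ≫ τ) h1).2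

lemma sigma_eqToHom {a b : ℕ} (h : a = b)
    (x : X.obj (op (SimplexCategory.mk b))) (t' : (SimplexCategory.mk a).toTopObj) :
    (⟨a, X.map (eqToHom (congrArg SimplexCategory.mk h)).op x, t'⟩ : X.RealizationPt)
      = ⟨b, x, SimplexCategory.toTopMap (eqToHom (congrArg SimplexCategory.mk h)) t'⟩ := by
  subst h
  simp only [eqToHom_refl, op_id, FunctorToTypes.map_id_apply, toTopMap_id]

/-- any two valid EZ decompositions give the same realization point -/
lemma triple_eq {k j j' : ℕ}
    (σ : SimplexCategory.mk k ⟶ SimplexCategory.mk j)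
    (σ' : SimplexCategory.mk k ⟶ SimplexCategory.mk j')
    (y : X.obj (op (SimplexCategory.mk j))) (y' : X.obj (op (SimplexCategory.mk j')))
    (hσ : Function.Surjective σ.toOrderHom) (hσ' : Function.Surjective σ'.toOrderHom)
    (hy : ¬ X.IsDegenerateSimplex y) (hy' : ¬ X.IsDegenerateSimplex y')
    (h : X.map σ.op y = X.map σ'.op y') (s : (SimplexCategory.mk k).toTopObj) :
    (⟨j, y, SimplexCategory.toTopMap σ s⟩ : X.RealizationPt)
      = ⟨j', y', SimplexCategory.toTopMap σ' s⟩ := by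
  have hj : j = j' :=
    le_antisymm (ezDims X σ σ' hσ hσ' y y' hy hy' h) (ezDims X σ' σ hσ' hσ y' y hy' hy h.symm)
  subst hj
  obtain ⟨h1, h2⟩ := ezUnique X σ σ' hσ hσ' y y' hy hy' h
  rw [h1, h2]

noncomputable def ezj {n : ℕ} (x : X.obj (op (SimplexCategory.mk n))) : ℕ :=
  (ezExists X n x).choose

noncomputable def ezσ {n : ℕ} (x : X.obj (op (SimplexCategory.mk n))) :
    SimplexCategory.mk n ⟶ SimplexCategory.mk (ezj X x) :=
  (ezExists X n x).choose_spec.choose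

noncomputable def ezy {n : ℕ} (x : X.obj (op (SimplexCategory.mk n))) :
    X.obj (op (SimplexCategory.mk (ezj X x))) :=
  (ezExists X n x).choose_spec.choose_spec.choose

lemma ez_spec {n : ℕ} (x : X.obj (op (SimplexCategory.mk n))) :
    Function.Surjective (ezσ X x).toOrderHom ∧ ¬ X.IsDegenerateSimplex (ezy X x) ∧
      X.map (ezσ X x).op (ezy X x) = x :=
  (ezExists X n x).choose_spec.choose_spec.choose_spec

/-- the normalization map -/
noncomputable def ezNormalize (p : X.RealizationPt) : X.RealizationPt :=
  ⟨ezj X p.2.1, ezy X p.2.1, SimplexCategory.toTopMap (ezσ X p.2.1) p.2.2⟩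

lemma eznorm_eq {k j : ℕ} (x : X.obj (op (SimplexCategory.mk k)))
    (σ : SimplexCategory.mk k ⟶ SimplexCategory.mk j) (y : X.obj (op (SimplexCategory.mk j)))
    (hσ : Function.Surjective σ.toOrderHom) (hy : ¬ X.IsDegenerateSimplex y)
    (hx : X.map σ.op y = x) (s : (SimplexCategory.mk k).toTopObj) :
    ezNormalize X ⟨k, x, s⟩ = ⟨j, y, SimplexCategory.toTopMap σ s⟩ := by
  obtain ⟨hs1, hs2, hs3⟩ := ez_spec X x
  exact triple_eq X (ezσ X x) σ (ezy X x) y hs1 hσ hs2 hy (by rw [hs3, hx]) s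

noncomputable def interiorize (p : X.RealizationPt) : X.RealizationPt :=
  ⟨sdim p.2.2, X.map (sδ p.2.2).op p.2.1, spt p.2.2⟩

noncomputable def nf (p : X.RealizationPt) : X.RealizationPt :=
  ezNormalize X (interiorize X p)

lemma rel_interiorize (p : X.RealizationPt) : X.RealizationRel p (interiorize X p) :=
  ⟨sδ p.2.2, rfl, toTopMap_sδ_spt _⟩

lemma rel_ezNormalize (p : X.RealizationPt) : X.RealizationRel (ezNormalize X p) p :=
  ⟨ezσ X p.2.1, (ez_spec X p.2.1).2.2, rfl⟩

lemma eqvGen_nf (p : X.RealizationPt) : Relation.EqvGen X.RealizationRel p (nf X p) :=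
  Relation.EqvGen.trans _ _ _ (Relation.EqvGen.rel _ _ (rel_interiorize X p))
    (Relation.EqvGen.symm _ _ (Relation.EqvGen.rel _ _ (rel_ezNormalize X (interiorize X p))))

lemma nf_nondeg (p : X.RealizationPt) : ¬ X.IsDegenerateSimplex (nf X p).2.1 :=
  (ez_spec X (interiorize X p).2.1).2.1

lemma nf_interior (p : X.RealizationPt) : SSet.IsInteriorPt (nf X p).2.2 :=
  interior_toTopMap _ (ez_spec X (interiorize X p).2.1).1 _ (spt_interior _)

/-- Claim 2: the EZ-normalization collapses pullbacks along surjections -/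
lemma ez_claim2 {k k' : ℕ} (x' : X.obj (op (SimplexCategory.mk k)))
    (β : SimplexCategory.mk k' ⟶ SimplexCategory.mk k)
    (hβ : Function.Surjective β.toOrderHom) (s' : (SimplexCategory.mk k').toTopObj) :
    ezNormalize X ⟨k', X.map β.op x', s'⟩
      = ezNormalize X ⟨k, x', SimplexCategory.toTopMap β s'⟩ := by
  obtain ⟨hs1, hs2, hs3⟩ := ez_spec X x'
  have h1 : X.map (β ≫ ezσ X x').op (ezy X x') = X.map β.op x' := by
    rw [op_comp, X.map_comp]
    show X.map β.op (X.map (ezσ X x').op _) = _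
    rw [hs3]
  have hsurj : Function.Surjective (β ≫ ezσ X x').toOrderHom := by
    rw [SimplexCategory.comp_toOrderHom]
    exact (hs1.comp hβ : _)
  rw [eznorm_eq X (X.map β.op x') (β ≫ ezσ X x') (ezy X x') hsurj hs2 h1 s',
    eznorm_eq X x' (ezσ X x') (ezy X x') hs1 hs2 hs3 (SimplexCategory.toTopMap β s'),
    toTopMap_comp]

/-- invariance of the normal form under the basic relation -/
lemma nf_rel_aux {n m : ℕ} (α : SimplexCategory.mk m ⟶ SimplexCategory.mk n)
    (x : X.obj (op (SimplexCategory.mk n))) (s : (SimplexCategory.mk m).toTopObj) :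
    nf X ⟨n, x, SimplexCategory.toTopMap α s⟩ = nf X ⟨m, X.map α.op x, s⟩ := by
  obtain ⟨β, hβsurj, hβcomm, hβpush⟩ := claim1 α s
  have hz : X.map (sδ s).op (X.map α.op x)
      = X.map β.op (X.map (sδ (SimplexCategory.toTopMap α s)).op x) := by
    calc X.map (sδ s).op (X.map α.op x)
        = X.map (sδ s ≫ α).op x := by rw [op_comp, X.map_comp]; rfl
      _ = X.map (β ≫ sδ (SimplexCategory.toTopMap α s)).op x := by rw [hβcomm]
      _ = X.map β.op (X.map (sδ (SimplexCategory.toTopMap α s)).op x) := by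
          rw [op_comp, X.map_comp]; rfl
  show ezNormalize X ⟨sdim (SimplexCategory.toTopMap α s), _, spt _⟩
    = ezNormalize X ⟨sdim s, X.map (sδ s).op (X.map α.op x), spt s⟩
  rw [hz, ez_claim2 X _ β hβsurj (spt s), hβpush]

lemma nf_rel_invariant {p q : X.RealizationPt} (h : X.RealizationRel p q) :
    nf X p = nf X q := by
  obtain ⟨n, x, t⟩ := p
  obtain ⟨m, z, s⟩ := q
  obtain ⟨α, hα1, hα2⟩ := h
  dsimp only at hα1 hα2
  show nf X ⟨n, x, t⟩ = nf X ⟨m, z, s⟩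
  rw [← hα1, ← hα2]
  exact nf_rel_aux X α x s

lemma interiorize_eq_self {p : X.RealizationPt} (h : SSet.IsInteriorPt p.2.2) :
    interiorize X p = p := by
  obtain ⟨n, x, t⟩ := p
  have hsupp : supp t = Finset.univ := by
    ext i
    simpa [mem_supp] using h i
  have hd : sdim t = n := by
    have h1 := supp_card t
    rw [hsupp] at h1
    simp [Finset.card_univ] at h1
    omega
  have hmono : Mono (eqToHom (congrArg SimplexCategory.mk hd).symm ≫ sδ t) := by
    have : Mono (sδ t) := SimplexCategory.mono_iff_injective.mpr (sδ_inj t)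
    infer_instance
  have hid : eqToHom (congrArg SimplexCategory.mk hd).symm ≫ sδ t = 𝟙 _ :=
    SimplexCategory.eq_id_of_mono _
  have hδ : sδ t = eqToHom (congrArg SimplexCategory.mk hd) := by
    have h2 := congrArg (fun f => eqToHom (congrArg SimplexCategory.mk hd) ≫ f) hid
    simpa using h2
  show (⟨sdim t, X.map (sδ t).op x, spt t⟩ : X.RealizationPt) = ⟨n, x, t⟩
  rw [show X.map (sδ t).op x = X.map (eqToHom (congrArg SimplexCategory.mk hd)).op x by rw [hδ],
    sigma_eqToHom X hd x (spt t), ← hδ, toTopMap_sδ_spt]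

lemma nf_eq_self {p : X.RealizationPt} (h1 : ¬ X.IsDegenerateSimplex p.2.1)
    (h2 : SSet.IsInteriorPt p.2.2) : nf X p = p := by
  obtain ⟨n, x, t⟩ := p
  show ezNormalize X (interiorize X ⟨n, x, t⟩) = _
  rw [interiorize_eq_self X h2]
  show ezNormalize X ⟨n, x, t⟩ = ⟨n, x, t⟩
  rw [eznorm_eq X x (𝟙 _) x (fun b => ⟨b, rfl⟩) h1 (by simp) t, toTopMap_id]

lemma nf_eqvGen_invariant {p q : X.RealizationPt}
    (h : Relation.EqvGen X.RealizationRel p q) : nf X p = nf X q := by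
  induction h with
  | rel a b hab => exact nf_rel_invariant X hab
  | refl a => rfl
  | symm a b _ ih => exact ih.symm
  | trans a b c _ _ ih1 ih2 => exact ih1.trans ih2

end RealAux

/-- Every point of the geometric realization `|X|` admits a representative `(x, t)` with `x`
non-degenerate and `t` an interior point of `Δ^n`, and this representative is unique. -/
theorem stmt7 (X : SSet) :
    (∀ p : X.RealizationPt,
      ∃ (n : ℕ) (x : X.obj (op (SimplexCategory.mk n)))
        (t : (SimplexCategory.mk n).toTopObj),
        ¬ X.IsDegenerateSimplex x ∧ SSet.IsInteriorPt t ∧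
          Relation.EqvGen X.RealizationRel p ⟨n, x, t⟩) ∧
    (∀ (n m : ℕ) (x : X.obj (op (SimplexCategory.mk n)))
        (y : X.obj (op (SimplexCategory.mk m)))
        (t : (SimplexCategory.mk n).toTopObj) (s : (SimplexCategory.mk m).toTopObj),
        ¬ X.IsDegenerateSimplex x → ¬ X.IsDegenerateSimplex y →
        SSet.IsInteriorPt t → SSet.IsInteriorPt s →
        Relation.EqvGen X.RealizationRel ⟨n, x, t⟩ ⟨m, y, s⟩ →
        n = m ∧ HEq x y ∧ HEq t s) := by
  constructor
  · intro p
    refine ⟨(RealAux.nf X p).1, (RealAux.nf X p).2.1, (RealAux.nf X p).2.2,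
      RealAux.nf_nondeg X p, RealAux.nf_interior X p, ?_⟩
    exact RealAux.eqvGen_nf X p
  · intro n m x y t s hx hy ht hs h
    have h1 := RealAux.nf_eqvGen_invariant X h
    rw [RealAux.nf_eq_self X (p := ⟨n, x, t⟩) hx ht, RealAux.nf_eq_self X (p := ⟨m, y, s⟩) hy hs] at h1
    obtain ⟨rfl, h2⟩ := Sigma.mk.inj_iff.mp h1
    have h3 := eq_of_heq h2
    obtain ⟨h4, h5⟩ := Prod.ext_iff.mp h3
    exact ⟨rfl, heq_of_eq h4, heq_of_eq h5⟩
end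

section
/- (Ken Brown's lemma) Suppose C is a model category and D is a category equipped with a class of weak equivalences satisfying the 2-out-of-3 property. If a functor F : C → D takes trivial cofibrations between cofibrant objects to weak equivalences, then F takes all weak equivalences between cofibrant objects to weak equivalences. -/
open CategoryTheory CategoryTheory.Limits

universe v v₂ v₃ u u₂ u₃

/-- `f` is a retract of `g` in the arrow category. -/
def IsRetractOf {C : Type u} [Category.{v} C] {X Y X' Y' : C}
    (f : X ⟶ Y) (g : X' ⟶ Y') : Prop :=
  ∃ (i : X ⟶ X') (r : X' ⟶ X) (j : Y ⟶ Y') (s : Y' ⟶ Y),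
    i ≫ r = 𝟙 X ∧ j ≫ s = 𝟙 Y ∧ i ≫ g = f ≫ j ∧ g ≫ s = r ≫ f

/-- A model structure in the sense of Quillen/Hovey: three classes of maps (weak equivalences,
cofibrations, fibrations), each closed under identities, composition and retracts, with weak
equivalences satisfying 2-out-of-3, the lifting axioms relating (trivial) cofibrations and
(trivial) fibrations, and the two factorization axioms.  Together with (co)completeness of the
underlying category, this is the notion of a model category. -/
structure ModelStructure (C : Type u) [Category.{v} C] where
  weq : MorphismProperty C
  cof : MorphismProperty C
  fib : MorphismProperty C
  weq_id : ∀ X : C, weq (𝟙 X)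
  cof_id : ∀ X : C, cof (𝟙 X)
  fib_id : ∀ X : C, fib (𝟙 X)
  weq_comp : ∀ {X Y Z : C} (f : X ⟶ Y) (g : Y ⟶ Z), weq f → weq g → weq (f ≫ g)
  cof_comp : ∀ {X Y Z : C} (f : X ⟶ Y) (g : Y ⟶ Z), cof f → cof g → cof (f ≫ g)
  fib_comp : ∀ {X Y Z : C} (f : X ⟶ Y) (g : Y ⟶ Z), fib f → fib g → fib (f ≫ g)
  weq_cancel_left : ∀ {X Y Z : C} (f : X ⟶ Y) (g : Y ⟶ Z), weq f → weq (f ≫ g) → weq g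
  weq_cancel_right : ∀ {X Y Z : C} (f : X ⟶ Y) (g : Y ⟶ Z), weq g → weq (f ≫ g) → weq f
  weq_retract : ∀ {X Y X' Y' : C} (f : X ⟶ Y) (g : X' ⟶ Y'), IsRetractOf f g → weq g → weq f
  cof_retract : ∀ {X Y X' Y' : C} (f : X ⟶ Y) (g : X' ⟶ Y'), IsRetractOf f g → cof g → cof f
  fib_retract : ∀ {X Y X' Y' : C} (f : X ⟶ Y) (g : X' ⟶ Y'), IsRetractOf f g → fib g → fib f
  lift_tcof_fib : ∀ {A B X Y : C} (i : A ⟶ B) (p : X ⟶ Y), cof i → weq i → fib p →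
    HasLiftingProperty i p
  lift_cof_tfib : ∀ {A B X Y : C} (i : A ⟶ B) (p : X ⟶ Y), cof i → fib p → weq p →
    HasLiftingProperty i p
  fact_cof_tfib : ∀ {X Y : C} (f : X ⟶ Y), ∃ (Z : C) (i : X ⟶ Z) (p : Z ⟶ Y),
    cof i ∧ fib p ∧ weq p ∧ i ≫ p = f
  fact_tcof_fib : ∀ {X Y : C} (f : X ⟶ Y), ∃ (Z : C) (i : X ⟶ Z) (p : Z ⟶ Y),
    cof i ∧ weq i ∧ fib p ∧ i ≫ p = f

/-- An object is cofibrant if the map from the initial object is a cofibration. -/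
def ModelStructure.Cofibrant {C : Type u} [Category.{v} C] [HasInitial C]
    (M : ModelStructure C) (X : C) : Prop :=
  M.cof (initial.to X)

/-- An object is fibrant if the map to the terminal object is a fibration. -/
def ModelStructure.Fibrant {C : Type u} [Category.{v} C] [HasTerminal C]
    (M : ModelStructure C) (X : C) : Prop :=
  M.fib (terminal.from X)

/-- `(F, U, adj)` is a Quillen adjunction if the left adjoint `F` preserves cofibrations and
trivial cofibrations. -/
def IsQuillenAdjunction {C : Type u} {D : Type u₂} [Category.{v} C] [Category.{v₂} D]
    (MC : ModelStructure C) (MD : ModelStructure D)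
    (F : C ⥤ D) (U : D ⥤ C) (_adj : F ⊣ U) : Prop :=
  (∀ {X Y : C} (f : X ⟶ Y), MC.cof f → MD.cof (F.map f)) ∧
  (∀ {X Y : C} (f : X ⟶ Y), MC.cof f → MC.weq f → MD.cof (F.map f) ∧ MD.weq (F.map f))

/-- A Quillen adjunction `(F, U, adj)` is a Quillen equivalence if for all cofibrant `X` and
fibrant `Y`, a map `f : F X ⟶ Y` is a weak equivalence iff its adjunct `X ⟶ U Y` is. -/
def IsQuillenEquivalence {C : Type u} {D : Type u₂} [Category.{v} C] [Category.{v₂} D]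
    [HasInitial C] [HasTerminal D]
    (MC : ModelStructure C) (MD : ModelStructure D)
    (F : C ⥤ D) (U : D ⥤ C) (adj : F ⊣ U) : Prop :=
  IsQuillenAdjunction MC MD F U adj ∧
  ∀ (X : C) (Y : D), MC.Cofibrant X → MD.Fibrant Y →
    ∀ f : F.obj X ⟶ Y, MD.weq f ↔ MC.weq ((adj.homEquiv X Y) f)


/-- A map with the left lifting property against all trivial fibrations is a cofibration. -/
lemma cof_of_llp {C : Type u} [Category.{v} C] (M : ModelStructure C)
    {A B : C} (j : A ⟶ B)
    (h : ∀ {X Y : C} (p : X ⟶ Y), M.fib p → M.weq p → HasLiftingProperty j p) :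
    M.cof j := by
  obtain ⟨Z, i, p, hi, hp, hpw, hip⟩ := M.fact_cof_tfib j
  haveI := h p hp hpw
  have sq : CommSq i j p (𝟙 B) := ⟨by simp [hip]⟩
  exact M.cof_retract j i ⟨𝟙 A, 𝟙 A, sq.lift, p, by simp, sq.fac_right, by
    simp [sq.fac_left], by simp [hip]⟩ hi

lemma cof_inl {C : Type u} [Category.{v} C] [HasInitial C] [HasBinaryCoproducts C]
    (M : ModelStructure C) {X Y : C} (hY : M.Cofibrant Y) :
    M.cof (coprod.inl : X ⟶ X ⨿ Y) := by
  apply cof_of_llp M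
  intro Z W p hp hpw
  haveI := M.lift_cof_tfib (initial.to Y) p hY hp hpw
  constructor
  intro u v sq
  have sq' : CommSq (initial.to Z) (initial.to Y) p (coprod.inr ≫ v) :=
    ⟨by apply Subsingleton.elim⟩
  exact ⟨⟨⟨coprod.desc u sq'.lift, coprod.inl_desc _ _, by
    apply coprod.hom_ext
    · rw [← Category.assoc, coprod.inl_desc, sq.w]
    · rw [← Category.assoc, coprod.inr_desc, sq'.fac_right]⟩⟩⟩

lemma cof_inr {C : Type u} [Category.{v} C] [HasInitial C] [HasBinaryCoproducts C]
    (M : ModelStructure C) {X Y : C} (hX : M.Cofibrant X) :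
    M.cof (coprod.inr : Y ⟶ X ⨿ Y) := by
  apply cof_of_llp M
  intro Z W p hp hpw
  haveI := M.lift_cof_tfib (initial.to X) p hX hp hpw
  constructor
  intro u v sq
  have sq' : CommSq (initial.to Z) (initial.to X) p (coprod.inl ≫ v) :=
    ⟨by apply Subsingleton.elim⟩
  exact ⟨⟨⟨coprod.desc sq'.lift u, coprod.inr_desc _ _, by
    apply coprod.hom_ext
    · rw [← Category.assoc, coprod.inl_desc, sq'.fac_right]
    · rw [← Category.assoc, coprod.inr_desc, sq.w]⟩⟩⟩

/-- (Ken Brown's lemma.)  Let `C` be a model category and `D` a category with a class `WD` of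
weak equivalences satisfying 2-out-of-3.  If `F : C ⥤ D` takes trivial cofibrations between
cofibrant objects to weak equivalences, then `F` takes all weak equivalences between cofibrant
objects to weak equivalences. -/
theorem stmt13 {C : Type u} {D : Type u₂} [Category.{v} C] [Category.{v₂} D]
    [HasLimits C] [HasColimits C] [HasInitial C]
    (M : ModelStructure C) (WD : MorphismProperty D)
    (WD_comp : ∀ {X Y Z : D} (f : X ⟶ Y) (g : Y ⟶ Z), WD f → WD g → WD (f ≫ g))
    (WD_cancel_left : ∀ {X Y Z : D} (f : X ⟶ Y) (g : Y ⟶ Z), WD f → WD (f ≫ g) → WD g)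
    (WD_cancel_right : ∀ {X Y Z : D} (f : X ⟶ Y) (g : Y ⟶ Z), WD g → WD (f ≫ g) → WD f)
    (F : C ⥤ D)
    (hF : ∀ {X Y : C} (f : X ⟶ Y), M.Cofibrant X → M.Cofibrant Y → M.cof f → M.weq f →
      WD (F.map f))
    {X Y : C} (f : X ⟶ Y) (hX : M.Cofibrant X) (hY : M.Cofibrant Y) (hf : M.weq f) :
    WD (F.map f) := by
  obtain ⟨Z, q, p, hq, hp, hpw, hqp⟩ := M.fact_cof_tfib (coprod.desc f (𝟙 Y))
  have ha : M.cof (coprod.inl ≫ q) := M.cof_comp _ _ (cof_inl M hY) hq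
  have hb : M.cof (coprod.inr ≫ q) := M.cof_comp _ _ (cof_inr M hX) hq
  have hap : (coprod.inl ≫ q) ≫ p = f := by rw [Category.assoc, hqp, coprod.inl_desc]
  have hbp : (coprod.inr ≫ q) ≫ p = 𝟙 Y := by rw [Category.assoc, hqp, coprod.inr_desc]
  have haw : M.weq (coprod.inl ≫ q) :=
    M.weq_cancel_right _ p hpw (by rw [hap]; exact hf)
  have hbw : M.weq (coprod.inr ≫ q) :=
    M.weq_cancel_right _ p hpw (by rw [hbp]; exact M.weq_id Y)
  have hZ : M.Cofibrant Z := by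
    have : initial.to Z = initial.to X ≫ (coprod.inl ≫ q) := by
      apply Subsingleton.elim
    rw [ModelStructure.Cofibrant, this]
    exact M.cof_comp _ _ hX ha
  have hFa : WD (F.map (coprod.inl ≫ q)) := hF _ hX hZ ha haw
  have hFb : WD (F.map (coprod.inr ≫ q)) := hF _ hY hZ hb hbw
  have hFid : WD (F.map (𝟙 Y)) := hF _ hY hY (M.cof_id Y) (M.weq_id Y)
  have hFp : WD (F.map p) := by
    apply WD_cancel_left (F.map (coprod.inr ≫ q)) (F.map p) hFb
    rw [← F.map_comp, hbp]; exact hFid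
  have : F.map f = F.map (coprod.inl ≫ q) ≫ F.map p := by
    rw [← F.map_comp, hap]
  rw [this]
  exact WD_comp _ _ hFa hFp
end

section
/- Given pseudotopological spaces X, Y, Z, continuous maps f : X → Y and g : X → Z with g a topological embedding (injective and a homeomorphism onto its image), the pushout map g' : Y → Y ⊔_X Z is again an embedding. -/
open Filter

universe u

/-- A pseudotopological (Choquet) structure on a set `X`: a convergence relation between filters
on `X` and points of `X` such that principal ultrafilters converge to their point, finer filters
converge whenever coarser ones do, and a filter converges as soon as all of its ultrafilter
refinements converge. -/
structure PseudoTop (X : Type u) where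
  conv : Filter X → X → Prop
  pure_conv : ∀ x : X, conv (pure x) x
  conv_mono : ∀ {F G : Filter X} {x : X}, conv F x → G ≤ F → conv G x
  conv_of_ultra : ∀ {F : Filter X} {x : X},
    (∀ U : Ultrafilter X, (U : Filter X) ≤ F → conv (U : Filter X) x) → conv F x

/-- A map between pseudotopological spaces is continuous if it sends convergent filters to
convergent filters. -/
def PsContinuous {X Y : Type u} (qX : PseudoTop X) (qY : PseudoTop Y) (f : X → Y) : Prop :=
  ∀ (F : Filter X) (x : X), qX.conv F x → qY.conv (F.map f) (f x)

/-- An embedding of pseudotopological spaces: an injective map which is an isomorphism onto its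
image with the subspace (initial) structure, i.e. a filter converges in the source iff its image
filter converges in the target. -/
def PsEmbedding {X Y : Type u} (qX : PseudoTop X) (qY : PseudoTop Y) (f : X → Y) : Prop :=
  Function.Injective f ∧ ∀ (F : Filter X) (x : X), qX.conv F x ↔ qY.conv (F.map f) (f x)

/-- The relation on `Y ⊕ Z` identifying `f x` with `g x`; the pushout `Y ⊔_X Z` is the quotient
of `Y ⊔ Z` by (the equivalence relation generated by) this relation. -/
def PushRel {X Y Z : Type u} (f : X → Y) (g : X → Z) : (Y ⊕ Z) → (Y ⊕ Z) → Prop :=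
  fun a b => ∃ x : X, a = Sum.inl (f x) ∧ b = Sum.inr (g x)

/-- The underlying set of the pushout `Y ⊔_X Z`. -/
def PushSpace {X Y Z : Type u} (f : X → Y) (g : X → Z) : Type u :=
  Quot (PushRel f g)

/-- The canonical map `Y → Y ⊔_X Z` (the pushout of `g` along `f`). -/
def pushInl {X Y Z : Type u} (f : X → Y) (g : X → Z) : Y → PushSpace f g :=
  fun y => Quot.mk _ (Sum.inl y)

/-- The canonical map `Z → Y ⊔_X Z`. -/
def pushInr {X Y Z : Type u} (f : X → Y) (g : X → Z) : Z → PushSpace f g :=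
  fun z => Quot.mk _ (Sum.inr z)

/-- The final (quotient) pseudotopological structure on the pushout `Y ⊔_X Z`: the finest
pseudotopological structure making both canonical maps continuous. -/
def pushStruct {X Y Z : Type u} (qY : PseudoTop Y) (qZ : PseudoTop Z)
    (f : X → Y) (g : X → Z) : PseudoTop (PushSpace f g) where
  conv F p := ∀ q : PseudoTop (PushSpace f g),
    PsContinuous qY q (pushInl f g) → PsContinuous qZ q (pushInr f g) → q.conv F p
  pure_conv x q _ _ := q.pure_conv x
  conv_mono h hle q h1 h2 := q.conv_mono (h q h1 h2) hle
  conv_of_ultra h q h1 h2 := q.conv_of_ultra fun U hU => h U hU q h1 h2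

section Aux

variable {X Y Z : Type u} {f : X → Y} {g : X → Z}

open Classical in
/-- Normal form on `Y ⊕ Z`: send `inr z` with `z` in the range of `g` to a corresponding
`inl (f x)`. -/
noncomputable def nf (f : X → Y) (g : X → Z) : (Y ⊕ Z) → (Y ⊕ Z)
  | Sum.inl y => Sum.inl y
  | Sum.inr z => if h : ∃ x, g x = z then Sum.inl (f h.choose) else Sum.inr z

lemma nf_const (hg : Function.Injective g) {a b : Y ⊕ Z} (h : PushRel f g a b) :
    nf f g a = nf f g b := by
  obtain ⟨x, rfl, rfl⟩ := h
  have hx : ∃ x', g x' = g x := ⟨x, rfl⟩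
  simp only [nf, dif_pos hx]
  exact congrArg (fun t => Sum.inl (f t)) (hg hx.choose_spec).symm

/-- Normal form descends to the pushout. -/
noncomputable def NF (hg : Function.Injective g) : PushSpace f g → (Y ⊕ Z) :=
  Quot.lift (nf f g) fun _ _ h => nf_const hg h

lemma pushInl_inj (hg : Function.Injective g) :
    Function.Injective (pushInl f g) := by
  intro y y' h
  have := congrArg (NF (f := f) hg) h
  simpa [NF, pushInl, nf] using this

lemma eq_of_pushInl_eq_pushInr (hg : Function.Injective g) {y : Y} {z : Z}
    (h : pushInl f g y = pushInr f g z) : ∃ x, y = f x ∧ z = g x := by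
  have := congrArg (NF (f := f) hg) h
  simp only [NF, pushInl, pushInr, nf] at this
  by_cases hz : ∃ x, g x = z
  · rw [dif_pos hz] at this
    exact ⟨hz.choose, Sum.inl.inj this, hz.choose_spec.symm⟩
  · rw [dif_neg hz] at this
    exact absurd this (by simp)

lemma pushInl_comp_f : pushInl f g ∘ f = pushInr f g ∘ g := by
  funext x
  exact Quot.sound ⟨x, rfl, rfl⟩

/-- The candidate pseudotopological structure on the pushout, defined ultrafilter-wise. -/
def qPush (qY : PseudoTop Y) (qZ : PseudoTop Z) (f : X → Y) (g : X → Z) :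
    PseudoTop (PushSpace f g) where
  conv G p := ∀ U : Ultrafilter (PushSpace f g), (U : Filter _) ≤ G →
    ((U : Filter _) = pure p) ∨
    (∃ (V : Ultrafilter Y) (y : Y), qY.conv (V : Filter Y) y ∧
      (U : Filter _) = Filter.map (pushInl f g) V ∧ p = pushInl f g y) ∨
    (∃ (W : Ultrafilter Z) (z : Z), qZ.conv (W : Filter Z) z ∧
      (U : Filter _) = Filter.map (pushInr f g) W ∧ p = pushInr f g z)
  pure_conv p := by
    intro U hU
    left
    have hUp : U = (pure p : Ultrafilter _) :=
      Ultrafilter.coe_le_coe.mp (by rw [Ultrafilter.coe_pure]; exact hU)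
    rw [hUp, Ultrafilter.coe_pure]
  conv_mono := by
    intro F G p h hle U hU
    exact h U (hU.trans hle)
  conv_of_ultra := by
    intro F p h U hU
    exact h U hU U le_rfl

lemma range_pushInl_mem {F : Filter Y} {U : Ultrafilter (PushSpace f g)}
    (hU : (U : Filter _) ≤ Filter.map (pushInl f g) F) :
    Set.range (pushInl f g) ∈ U :=
  hU (by rw [mem_map]; exact Filter.univ_mem' fun y => ⟨y, rfl⟩)

lemma range_pushInr_mem {F : Filter Z} {U : Ultrafilter (PushSpace f g)}
    (hU : (U : Filter _) ≤ Filter.map (pushInr f g) F) :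
    Set.range (pushInr f g) ∈ U :=
  hU (by rw [mem_map]; exact Filter.univ_mem' fun z => ⟨z, rfl⟩)

lemma qPush_contInl (hg : Function.Injective g) (qY : PseudoTop Y) (qZ : PseudoTop Z) :
    PsContinuous qY (qPush qY qZ f g) (pushInl f g) := by
  intro F y hF U hU
  right; left
  have hrange : Set.range (pushInl f g) ∈ U := range_pushInl_mem hU
  have hinj := pushInl_inj (f := f) hg
  refine ⟨U.comap hinj hrange, y, ?_, ?_, rfl⟩
  · refine qY.conv_mono hF ?_
    rw [Ultrafilter.coe_comap]
    calc Filter.comap (pushInl f g) U ≤ Filter.comap (pushInl f g) (Filter.map (pushInl f g) F) :=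
          comap_mono hU
      _ = F := comap_map hinj
  · rw [Ultrafilter.coe_comap, map_comap_of_mem hrange]

lemma qPush_contInr (hg : Function.Injective g) (qY : PseudoTop Y) (qZ : PseudoTop Z) :
    PsContinuous qZ (qPush qY qZ f g) (pushInr f g) := by
  intro F z hF U hU
  right; right
  have hrange : Set.range (pushInr f g) ∈ U := range_pushInr_mem hU
  -- find an ultrafilter W ≤ F with map pushInr W = U
  have hne : Filter.NeBot (Filter.comap (pushInr f g) (U : Filter _) ⊓ F) := by
    rw [neBot_iff]
    intro hbot
    rw [inf_eq_bot_iff] at hbot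
    obtain ⟨A, hA, B, hB, hAB⟩ := hbot
    obtain ⟨s, hs, hsA⟩ := hA
    have himg : pushInr f g '' B ∈ (U : Filter _) := by
      refine hU ?_
      rw [mem_map]
      exact mem_of_superset hB (Set.subset_preimage_image _ _)
    have hns : (s ∩ pushInr f g '' B).Nonempty := by
      have : s ∩ pushInr f g '' B ∈ (U : Filter _) := inter_mem hs himg
      exact Ultrafilter.nonempty_of_mem this
    obtain ⟨p, hps, b, hbB, rfl⟩ := hns
    have : b ∈ A ∩ B := ⟨hsA hps, hbB⟩
    rw [Set.eq_empty_iff_forall_notMem] at hAB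
    exact hAB b this
  obtain ⟨W, hW⟩ := Ultrafilter.exists_le (Filter.comap (pushInr f g) (U : Filter _) ⊓ F)
  have hWF : (W : Filter Z) ≤ F := hW.trans inf_le_right
  have hmap : Filter.map (pushInr f g) (W : Filter Z) = (U : Filter _) := by
    have h1 : Filter.map (pushInr f g) (W : Filter Z) ≤ (U : Filter _) := by
      calc Filter.map (pushInr f g) (W : Filter Z)
          ≤ Filter.map (pushInr f g) (Filter.comap (pushInr f g) (U : Filter _)) :=
            map_mono (hW.trans inf_le_left)
        _ = (U : Filter _) := map_comap_of_mem hrange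
    have h3 : Ultrafilter.map (pushInr f g) W = U :=
      Ultrafilter.coe_le_coe.mp (by rw [Ultrafilter.coe_map]; exact h1)
    rw [← h3, Ultrafilter.coe_map]
  exact ⟨W, z, qZ.conv_mono hF hWF, hmap.symm, rfl⟩

end Aux

/-- (Pushouts of embeddings in `PsTop`.)  Given pseudotopological spaces `X, Y, Z` and continuous
maps `f : X → Y`, `g : X → Z` with `g` an embedding, the pushout map `g' : Y → Y ⊔_X Z` is again
an embedding.  (This is the concrete statement behind the categorical remark that in the
category of pseudotopological spaces the pushout of an embedding is an embedding.) -/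
theorem stmt16 {X Y Z : Type u} (qX : PseudoTop X) (qY : PseudoTop Y) (qZ : PseudoTop Z)
    (f : X → Y) (g : X → Z)
    (hf : PsContinuous qX qY f) (hgc : PsContinuous qX qZ g)
    (hg : PsEmbedding qX qZ g) :
    PsEmbedding qY (pushStruct qY qZ f g) (pushInl f g) := by
  obtain ⟨hginj, hgconv⟩ := hg
  have hinj := pushInl_inj (f := f) hginj
  refine ⟨hinj, fun F y => ⟨fun h q h1 h2 => h1 F y h, fun h => ?_⟩⟩
  -- use the candidate structure qPush
  have hq := h (qPush qY qZ f g) (qPush_contInl hginj qY qZ) (qPush_contInr hginj qY qZ)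
  refine qY.conv_of_ultra fun V hV => ?_
  have hUle : (V.map (pushInl f g) : Filter _) ≤ Filter.map (pushInl f g) F := by
    rw [Ultrafilter.coe_map]; exact map_mono hV
  rcases hq (V.map (pushInl f g)) hUle with hc | ⟨V', y', hconv, hUeq, hyeq⟩ |
    ⟨W, z, hconv, hUeq, hyeq⟩
  · -- U = pure (pushInl y), so V = pure y
    rw [Ultrafilter.coe_map] at hc
    have : Filter.map (pushInl f g) (V : Filter Y) = Filter.map (pushInl f g) (pure y) := by
      rw [hc, Filter.map_pure]
    have hVpure : (V : Filter Y) = pure y := Filter.map_injective hinj this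
    rw [hVpure]; exact qY.pure_conv y
  · -- the inl case
    rw [Ultrafilter.coe_map] at hUeq
    have hVV' : (V : Filter Y) = (V' : Filter Y) := Filter.map_injective hinj hUeq
    have hyy' : y = y' := hinj hyeq
    rw [hVV', hyy']; exact hconv
  · -- the inr case: use the embedding property of g
    rw [Ultrafilter.coe_map] at hUeq
    obtain ⟨x₀, hy₀, hz₀⟩ := eq_of_pushInl_eq_pushInr hginj hyeq
    -- range g ∈ W
    have hrangeInl : Set.range (pushInl f g) ∈ Filter.map (pushInr f g) (W : Filter Z) := by
      rw [← hUeq, mem_map]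
      exact Filter.univ_mem' fun a => ⟨a, rfl⟩
    have hrg : Set.range g ∈ W := by
      rw [mem_map] at hrangeInl
      refine mem_of_superset hrangeInl ?_
      rintro z' ⟨y', hy'⟩
      obtain ⟨x, _, hzx⟩ := eq_of_pushInl_eq_pushInr hginj hy'
      exact ⟨x, hzx.symm⟩
    set W₀ := W.comap hginj hrg with hW₀
    have hmapg : Filter.map g (W₀ : Filter X) = (W : Filter Z) := by
      rw [hW₀, Ultrafilter.coe_comap, map_comap_of_mem hrg]
    have hconvX : qX.conv (W₀ : Filter X) x₀ := by
      rw [hgconv]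
      rw [hmapg, ← hz₀]
      exact hconv
    have hconvY : qY.conv (Filter.map f (W₀ : Filter X)) (f x₀) := hf _ _ hconvX
    have hVeq : (V : Filter Y) = Filter.map f (W₀ : Filter X) := by
      apply Filter.map_injective hinj
      rw [hUeq, ← hmapg, Filter.map_map, Filter.map_map, pushInl_comp_f]
    rw [hVeq, hy₀]
    exact hconvY
end

section
/- There is a homeomorphism exhibiting the pushout of the inclusions S^i × S^j → D^{i+1} × S^j and S^i × S^j → S^i × D^{j+1} as the sphere S^{i+j+1}; that is, the square with corners S^i × S^j, D^{i+1} × S^j, S^i × D^{j+1}, S^{i+j+1} (where the maps into S^{i+j+1} are the restrictions of the standard homeomorphism ∂(D^{i+1} × D^{j+1}) ≅ S^{i+j+1}) is a pushout of topological spaces. -/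
open CategoryTheory Metric

noncomputable section

/-- Euclidean `n`-space. -/
abbrev Eu (n : ℕ) : Type := EuclideanSpace ℝ (Fin n)

/-- The closed unit `n`-disk `D^n ⊆ ℝ^n`. -/
abbrev uDisk (n : ℕ) : Set (Eu n) := Metric.closedBall 0 1

/-- The unit sphere `S^n = ∂D^{n+1} ⊆ ℝ^{n+1}`. -/
abbrev uSph (n : ℕ) : Set (Eu (n + 1)) := Metric.sphere 0 1

/-- `∂(D^{i+1} × D^{j+1}) = (D^{i+1} × S^j) ∪ (S^i × D^{j+1})` as a subset of
`ℝ^{i+1} × ℝ^{j+1}`. -/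
def bdry (i j : ℕ) : Set (Eu (i + 1) × Eu (j + 1)) :=
  (uDisk (i + 1) ×ˢ uSph j) ∪ (uSph i ×ˢ uDisk (j + 1))

/-- The inclusion `S^i × S^j → D^{i+1} × S^j`. -/
def inclTop (i j : ℕ) : TopCat.of (↥(uSph i) × ↥(uSph j)) ⟶ TopCat.of (↥(uDisk (i + 1)) × ↥(uSph j)) :=
  TopCat.ofHom ⟨fun p => (Set.inclusion sphere_subset_closedBall p.1, p.2),
    ((continuous_inclusion sphere_subset_closedBall).comp continuous_fst).prodMk
      continuous_snd⟩

/-- The inclusion `S^i × S^j → S^i × D^{j+1}`. -/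
def inclLeft (i j : ℕ) : TopCat.of (↥(uSph i) × ↥(uSph j)) ⟶ TopCat.of (↥(uSph i) × ↥(uDisk (j + 1))) :=
  TopCat.ofHom ⟨fun p => (p.1, Set.inclusion sphere_subset_closedBall p.2),
    continuous_fst.prodMk
      ((continuous_inclusion sphere_subset_closedBall).comp continuous_snd)⟩

/-- The inclusion `D^{i+1} × S^j → ∂(D^{i+1} × D^{j+1})`. -/
def intoBdry₁ (i j : ℕ) : C(↥(uDisk (i + 1)) × ↥(uSph j), ↥(bdry i j)) :=
  ⟨fun p => ⟨(p.1.1, p.2.1), Or.inl ⟨p.1.2, p.2.2⟩⟩,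
    Continuous.subtype_mk
      ((continuous_subtype_val.comp continuous_fst).prodMk
        (continuous_subtype_val.comp continuous_snd)) _⟩

/-- The inclusion `S^i × D^{j+1} → ∂(D^{i+1} × D^{j+1})`. -/
def intoBdry₂ (i j : ℕ) : C(↥(uSph i) × ↥(uDisk (j + 1)), ↥(bdry i j)) :=
  ⟨fun p => ⟨(p.1.1, p.2.1), Or.inr ⟨p.1.2, p.2.2⟩⟩,
    Continuous.subtype_mk
      ((continuous_subtype_val.comp continuous_fst).prodMk
        (continuous_subtype_val.comp continuous_snd)) _⟩

/-- The restriction of a homeomorphism `∂(D^{i+1} × D^{j+1}) ≅ S^{i+j+1}` to the piece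
`D^{i+1} × S^j` of the boundary. -/
def charTop (i j : ℕ) (h : ↥(bdry i j) ≃ₜ ↥(uSph (i + j + 1))) :
    TopCat.of (↥(uDisk (i + 1)) × ↥(uSph j)) ⟶ TopCat.of (↥(uSph (i + j + 1))) :=
  TopCat.ofHom ⟨fun p => h (intoBdry₁ i j p), h.continuous.comp (intoBdry₁ i j).continuous⟩

/-- The restriction of a homeomorphism `∂(D^{i+1} × D^{j+1}) ≅ S^{i+j+1}` to the piece
`S^i × D^{j+1}` of the boundary. -/
def charLeft (i j : ℕ) (h : ↥(bdry i j) ≃ₜ ↥(uSph (i + j + 1))) :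
    TopCat.of (↥(uSph i) × ↥(uDisk (j + 1))) ⟶ TopCat.of (↥(uSph (i + j + 1))) :=
  TopCat.ofHom ⟨fun p => h (intoBdry₂ i j p), h.continuous.comp (intoBdry₂ i j).continuous⟩


section Aux

open Set CategoryTheory.Limits

/-! ### A radial homeomorphism between unit spheres -/

lemma auxMemSphere {G : Type*} [NormedAddCommGroup G] [NormedSpace ℝ G] {v : G} (hv : v ≠ 0) :
    ‖v‖⁻¹ • v ∈ Metric.sphere (0 : G) 1 := by
  have : ‖v‖ ≠ 0 := norm_ne_zero_iff.2 hv
  simp [mem_sphere_zero_iff_norm, norm_smul, inv_mul_cancel₀ this]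

lemma auxKey {E F : Type*} [NormedAddCommGroup E] [NormedSpace ℝ E]
    [NormedAddCommGroup F] [NormedSpace ℝ F] (e : E ≃L[ℝ] F) (x : E) (hx : ‖x‖ = 1) :
    ‖e.symm (‖e x‖⁻¹ • e x)‖⁻¹ • e.symm (‖e x‖⁻¹ • e x) = x := by
  have hx0 : x ≠ 0 := by rintro rfl; simp at hx
  have hex : e x ≠ 0 := fun h0 => hx0 (by simpa using congrArg e.symm h0)
  have hn : ‖e x‖ ≠ 0 := norm_ne_zero_iff.2 hex
  rw [map_smul, e.symm_apply_apply, norm_smul, norm_inv, norm_norm, hx, mul_one, inv_inv,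
    smul_smul, mul_inv_cancel₀ hn, one_smul]

/-- The radial homeomorphism between unit spheres induced by a continuous linear
equivalence. -/
def sphereHomeoOfCLE {E F : Type*} [NormedAddCommGroup E] [NormedSpace ℝ E]
    [NormedAddCommGroup F] [NormedSpace ℝ F] (e : E ≃L[ℝ] F) :
    ↥(Metric.sphere (0 : E) 1) ≃ₜ ↥(Metric.sphere (0 : F) 1) where
  toFun x := ⟨‖e x.1‖⁻¹ • e x.1, auxMemSphere (by
    have hx0 : (x : E) ≠ 0 := ne_zero_of_mem_unit_sphere x
    exact fun h0 => hx0 (by simpa using congrArg e.symm h0))⟩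
  invFun y := ⟨‖e.symm y.1‖⁻¹ • e.symm y.1, auxMemSphere (by
    have hy0 : (y : F) ≠ 0 := ne_zero_of_mem_unit_sphere y
    exact fun h0 => hy0 (by simpa using congrArg e h0))⟩
  left_inv x := Subtype.ext (auxKey e x.1 (mem_sphere_zero_iff_norm.1 x.2))
  right_inv y := Subtype.ext (by
    have := auxKey e.symm y.1 (mem_sphere_zero_iff_norm.1 y.2)
    simpa using this)
  continuous_toFun := by
    have c : Continuous fun x : ↥(Metric.sphere (0 : E) 1) => e x.1 :=
      e.continuous.comp continuous_subtype_val
    have hne : ∀ x : ↥(Metric.sphere (0 : E) 1), ‖e x.1‖ ≠ 0 := fun x =>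
      norm_ne_zero_iff.2 fun h0 =>
        (ne_zero_of_mem_unit_sphere x) (by simpa using congrArg e.symm h0)
    exact Continuous.subtype_mk ((c.norm.inv₀ hne).smul c) _
  continuous_invFun := by
    have c : Continuous fun y : ↥(Metric.sphere (0 : F) 1) => e.symm y.1 :=
      e.symm.continuous.comp continuous_subtype_val
    have hne : ∀ y : ↥(Metric.sphere (0 : F) 1), ‖e.symm y.1‖ ≠ 0 := fun y =>
      norm_ne_zero_iff.2 fun h0 =>
        (ne_zero_of_mem_unit_sphere y) (by simpa using congrArg e h0)
    exact Continuous.subtype_mk ((c.norm.inv₀ hne).smul c) _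

/-- A continuous linear equivalence `ℝ^{i+1} × ℝ^{j+1} ≃ ℝ^{i+j+2}`. -/
def euEquiv (i j : ℕ) : (Eu (i + 1) × Eu (j + 1)) ≃L[ℝ] Eu (i + j + 2) :=
  LinearEquiv.toContinuousLinearEquiv
    (LinearEquiv.ofFinrankEq _ _ (by
      simp [Module.finrank_prod, finrank_euclideanSpace_fin]; ring))

lemma bdry_eq (i j : ℕ) :
    bdry i j = Metric.sphere (0 : Eu (i + 1) × Eu (j + 1)) 1 := by
  rw [show (0 : Eu (i + 1) × Eu (j + 1)) = ((0, 0) : Eu (i + 1) × Eu (j + 1)) from rfl,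
    sphere_prod]
  exact Set.union_comm _ _

/-- The homeomorphism `∂(D^{i+1} × D^{j+1}) ≅ S^{i+j+1}`. -/
def theHomeo (i j : ℕ) : ↥(bdry i j) ≃ₜ ↥(uSph (i + j + 1)) :=
  (Homeomorph.setCongr (bdry_eq i j)).trans (sphereHomeoOfCLE (euEquiv i j))

/-! ### Gluing maps over the closed cover of the boundary -/

lemma bdry_mem_fst {i j : ℕ} (p : ↥(bdry i j)) : p.1.1 ∈ uDisk (i + 1) :=
  p.2.elim (fun h => h.1) (fun h => sphere_subset_closedBall h.1)

lemma bdry_mem_of_not {i j : ℕ} (p : ↥(bdry i j)) (hp : p.1.2 ∉ uSph j) :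
    p.1.1 ∈ uSph i ∧ p.1.2 ∈ uDisk (j + 1) :=
  p.2.elim (fun h => absurd h.2 hp) id

open scoped Classical in
/-- Glue a map on `D^{i+1} × S^j` and a map on `S^i × D^{j+1}` to a map on the boundary. -/
def glueFun (i j : ℕ) {W : Type*} (f : ↥(uDisk (i + 1)) × ↥(uSph j) → W)
    (g : ↥(uSph i) × ↥(uDisk (j + 1)) → W) (p : ↥(bdry i j)) : W :=
  if hp : p.1.2 ∈ uSph j then f (⟨p.1.1, bdry_mem_fst p⟩, ⟨p.1.2, hp⟩)
  else g (⟨p.1.1, (bdry_mem_of_not p hp).1⟩, ⟨p.1.2, (bdry_mem_of_not p hp).2⟩)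

lemma glueFun_continuous (i j : ℕ) {W : Type*} [TopologicalSpace W]
    {f : ↥(uDisk (i + 1)) × ↥(uSph j) → W} {g : ↥(uSph i) × ↥(uDisk (j + 1)) → W}
    (hf : Continuous f) (hg : Continuous g)
    (hfg : ∀ (a : ↥(uSph i)) (b : ↥(uSph j)),
      f (⟨a.1, sphere_subset_closedBall a.2⟩, b) = g (a, ⟨b.1, sphere_subset_closedBall b.2⟩)) :
    Continuous (glueFun i j f g) := by
  set A : Set ↥(bdry i j) := Subtype.val ⁻¹' (uDisk (i + 1) ×ˢ uSph j) with hAdef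
  set B : Set ↥(bdry i j) := Subtype.val ⁻¹' (uSph i ×ˢ uDisk (j + 1)) with hBdef
  have hA : IsClosed A :=
    (IsClosed.prod Metric.isClosed_closedBall Metric.isClosed_sphere).preimage continuous_subtype_val
  have hB : IsClosed B :=
    (IsClosed.prod Metric.isClosed_sphere Metric.isClosed_closedBall).preimage continuous_subtype_val
  have hcov : A ∪ B = Set.univ := Set.eq_univ_of_forall fun p => p.2
  have hcA : ContinuousOn (glueFun i j f g) A := by
    rw [continuousOn_iff_continuous_restrict]
    have hres : A.restrict (glueFun i j f g) =
        fun q : ↥A => f (⟨q.1.1.1, bdry_mem_fst q.1⟩, ⟨q.1.1.2, q.2.2⟩) := by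
      funext q
      show glueFun i j f g q.1 = _
      unfold glueFun
      rw [dif_pos q.2.2]
    show Continuous (A.restrict (glueFun i j f g))
    rw [hres]
    exact hf.comp (Continuous.prodMk
      (Continuous.subtype_mk
        (continuous_fst.comp (continuous_subtype_val.comp continuous_subtype_val)) _)
      (Continuous.subtype_mk
        (continuous_snd.comp (continuous_subtype_val.comp continuous_subtype_val)) _))
  have hcB : ContinuousOn (glueFun i j f g) B := by
    rw [continuousOn_iff_continuous_restrict]
    have hres : B.restrict (glueFun i j f g) =
        fun q : ↥B => g (⟨q.1.1.1, q.2.1⟩, ⟨q.1.1.2, q.2.2⟩) := by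
      funext q
      show glueFun i j f g q.1 = _
      unfold glueFun
      split_ifs with hp
      · exact hfg ⟨q.1.1.1, q.2.1⟩ ⟨q.1.1.2, hp⟩
      · rfl
    show Continuous (B.restrict (glueFun i j f g))
    rw [hres]
    exact hg.comp (Continuous.prodMk
      (Continuous.subtype_mk
        (continuous_fst.comp (continuous_subtype_val.comp continuous_subtype_val)) _)
      (Continuous.subtype_mk
        (continuous_snd.comp (continuous_subtype_val.comp continuous_subtype_val)) _))
  have hlf : LocallyFinite (fun b : Bool => cond b A B) := locallyFinite_of_finite _
  refine hlf.continuous ?_ ?_ ?_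
  · rw [← Set.union_eq_iUnion, hcov]
  · rintro (_ | _)
    · exact hB
    · exact hA
  · rintro (_ | _)
    · exact hcB
    · exact hcA

end Aux

/-- There is a homeomorphism `∂(D^{i+1} × D^{j+1}) ≅ S^{i+j+1}` exhibiting the square with
corners `S^i × S^j`, `D^{i+1} × S^j`, `S^i × D^{j+1}` and `S^{i+j+1}` — where the maps into
`S^{i+j+1}` are the restrictions of this homeomorphism to the two pieces of the boundary — as a
pushout of topological spaces. -/
theorem stmt19 (i j : ℕ) :
    ∃ h : ↥(bdry i j) ≃ₜ ↥(uSph (i + j + 1)),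
      IsPushout (inclTop i j) (inclLeft i j) (charTop i j h) (charLeft i j h) := by
  refine ⟨theHomeo i j, ?_⟩
  set h := theHomeo i j with hh
  have comm : inclTop i j ≫ charTop i j h = inclLeft i j ≫ charLeft i j h := by
    refine ConcreteCategory.hom_ext _ _ fun p => ?_
    show h (intoBdry₁ i j (inclTop i j p)) = h (intoBdry₂ i j (inclLeft i j p))
    exact congrArg h (Subtype.ext rfl)
  refine IsPushout.of_isColimit
    (Limits.PushoutCocone.IsColimit.mk comm
      (fun s => TopCat.ofHom ⟨fun y => glueFun i j s.inl s.inr (h.symm y), ?_⟩) ?_ ?_ ?_)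
  · -- continuity of the descent map
    exact (glueFun_continuous i j (ContinuousMap.continuous s.inl.hom)
      (ContinuousMap.continuous s.inr.hom)
      (fun a b => ConcreteCategory.congr_hom s.condition (a, b))).comp
      h.symm.continuous
  · -- fac_left
    intro s
    refine ConcreteCategory.hom_ext _ _ fun p => ?_
    show glueFun i j s.inl s.inr (h.symm (h (intoBdry₁ i j p))) = s.inl p
    rw [Homeomorph.symm_apply_apply]
    unfold glueFun
    split_ifs with hp
    · rfl
    · exact absurd p.2.2 hp
  · -- fac_right
    intro s
    refine ConcreteCategory.hom_ext _ _ fun p => ?_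
    show glueFun i j s.inl s.inr (h.symm (h (intoBdry₂ i j p))) = s.inr p
    rw [Homeomorph.symm_apply_apply]
    unfold glueFun
    split_ifs with hp
    · exact ConcreteCategory.congr_hom s.condition (p.1, ⟨p.2.1, hp⟩)
    · rfl
  · -- uniqueness
    intro s m hm₁ hm₂
    refine ConcreteCategory.hom_ext _ _ fun y => ?_
    have hy : h (h.symm y) = y := h.apply_symm_apply y
    show m y = glueFun i j s.inl s.inr (h.symm y)
    unfold glueFun
    split_ifs with hp
    · have := ConcreteCategory.congr_hom hm₁
        ((⟨(h.symm y).1.1, bdry_mem_fst _⟩, ⟨(h.symm y).1.2, hp⟩) :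
          ↥(uDisk (i + 1)) × ↥(uSph j))
      conv_lhs => rw [← hy]
      exact this
    · have := ConcreteCategory.congr_hom hm₂
        ((⟨(h.symm y).1.1, (bdry_mem_of_not _ hp).1⟩,
          ⟨(h.symm y).1.2, (bdry_mem_of_not _ hp).2⟩) :
          ↥(uSph i) × ↥(uDisk (j + 1)))
      conv_lhs => rw [← hy]
      exact this
end
end
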